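/- arXiv:1712.01583 — 10 statements merged into one kernel-verified Lean document; each statement's English description precedes it below -/
import Mathlib

section
/- Let Γ be a finite simple graph and let A_Γ be the associated right-angled Artin group. For a full subgraph Δ of Γ, the center of the special subgroup A_Δ equals A_{Z(Δ)}, where Z(Δ) is the full subgraph of Δ consisting of those vertices of Δ adjacent to every other vertex of Δ. -/
/-! Basic definitions: right-angled Artin groups, special subgroups,
relative automorphism notions, and graph-theoretic notions from
Day–Wade, "Relative automorphism groups of right-angled Artin groups". -/

namespace RAAGPaper

open scoped commutatorElement

variable {V : Type}

/-- The commutator relations defining the RAAG on a simple graph. -/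
def raagRels (G : SimpleGraph V) : Set (FreeGroup V) :=
  {r | ∃ v w : V, G.Adj v w ∧ r = ⁅FreeGroup.of v, FreeGroup.of w⁆}

/-- The right-angled Artin group on the graph `G`. -/
abbrev RAAG (G : SimpleGraph V) : Type := PresentedGroup (raagRels G)

/-- The generator of `RAAG G` corresponding to a vertex. -/
def gen (G : SimpleGraph V) (v : V) : RAAG G := PresentedGroup.of v

/-- The special subgroup `A_Δ` generated by the vertices of a (full) subgraph `Δ`. -/
def sp (G : SimpleGraph V) (Δ : Set V) : Subgroup (RAAG G) :=
  Subgroup.closure (gen G '' Δ)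

/-- The link of a vertex. -/
def lk (G : SimpleGraph V) (v : V) : Set V := {w | G.Adj v w}

/-- The star of a vertex. -/
def st (G : SimpleGraph V) (v : V) : Set V := insert v (lk G v)

/-- The standard (domination) order: `u ≤ v` iff `lk(u) ⊆ st(v)`. -/
def stdLE (G : SimpleGraph V) (u v : V) : Prop := lk G u ⊆ st G v

/-- An automorphism acts trivially on a subgroup if it agrees with an inner
automorphism on that subgroup. -/
def ActsTrivially {A : Type*} [Group A] (φ : MulAut A) (H : Subgroup A) : Prop :=
  ∃ g : A, ∀ h ∈ H, φ h = g * h * g⁻¹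

/-- An automorphism preserves a subgroup if it sends it to a conjugate of itself. -/
def Preserves {A : Type*} [Group A] (φ : MulAut A) (H : Subgroup A) : Prop :=
  ∃ g : A, Subgroup.map φ.toMonoidHom H = Subgroup.map (MulAut.conj g).toMonoidHom H

/-- `𝒢`-adjacency: adjacent in `G` or contained in a common member of `𝒢`. -/
def gAdj (G : SimpleGraph V) (calG : Set (Set V)) (u w : V) : Prop :=
  G.Adj u w ∨ ∃ Δ ∈ calG, u ∈ Δ ∧ w ∈ Δ

/-- `𝒢`-reachability within a set `S` of vertices. -/
def gReach (G : SimpleGraph V) (calG : Set (Set V)) (S : Set V) : V → V → Prop :=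
  Relation.ReflTransGen (fun a b => a ∈ S ∧ b ∈ S ∧ gAdj G calG a b)

/-- `K` is a union of `𝒢`-components of (the full subgraph on) `S`.
With `calG = ∅` this says `K` is a union of connected components of `S`. -/
def UnionOfComps (G : SimpleGraph V) (calG : Set (Set V)) (S K : Set V) : Prop :=
  K ⊆ S ∧ ∀ u ∈ K, ∀ w, gReach G calG S u w → w ∈ K

/-- The members of `𝒢` not containing the vertex `x`. -/
def calGx (calG : Set (Set V)) (x : V) : Set (Set V) := {Δ ∈ calG | x ∉ Δ}

/-- The `𝒢`-order: `u ≤_𝒢 v` iff `u ≤ v` in the standard order and every member of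
`𝒢` containing `u` also contains `v`. -/
def gLE (G : SimpleGraph V) (calG : Set (Set V)) (u v : V) : Prop :=
  stdLE G u v ∧ ∀ Δ ∈ calG, u ∈ Δ → v ∈ Δ

/-- `Δ` meets at most one `𝒢^x`-component of `Γ - st(x)`. -/
def MeetsAtMostOne (G : SimpleGraph V) (calG : Set (Set V)) (x : V) (Δ : Set V) : Prop :=
  ∀ u w, u ∈ Δ → w ∈ Δ → u ∈ (st G x)ᶜ → w ∈ (st G x)ᶜ →
    gReach G (calGx calG x) ((st G x)ᶜ) u w

/-- `Δ` is upwards closed under the `𝒢`-order. -/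
def UpClosed (G : SimpleGraph V) (calG : Set (Set V)) (Δ : Set V) : Prop :=
  ∀ v ∈ Δ, ∀ w, gLE G calG v w → w ∈ Δ

/-- `Δ` is not `𝒢`-star-separated by any outside vertex. -/
def NotStarSep (G : SimpleGraph V) (calG : Set (Set V)) (Δ : Set V) : Prop :=
  ∀ x, x ∉ Δ → MeetsAtMostOne G calG x Δ

/-- All members of `calG` are proper (special) subgroups. -/
def Proper (calG : Set (Set V)) : Prop := ∀ Δ ∈ calG, Δ ≠ Set.univ

/-- Word length of an element of the RAAG with respect to the standard generators. -/
noncomputable def wordLength (G : SimpleGraph V) (g : RAAG G) : ℕ :=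
  sInf {n | ∃ l : List (V × Bool), PresentedGroup.mk (raagRels G) (FreeGroup.mk l) = g ∧
    l.length = n}

/-- An element is cyclically reduced if it has minimal word length in its
conjugacy class. -/
noncomputable def CycRed (G : SimpleGraph V) (g : RAAG G) : Prop :=
  ∀ h : RAAG G, wordLength G g ≤ wordLength G (h * g * h⁻¹)

/-- The link of `v` computed inside the full subgraph `Δ`. -/
def lkIn (G : SimpleGraph V) (Δ : Set V) (v : V) : Set V := {w ∈ Δ | G.Adj v w}

/-- The star of `v` computed inside the full subgraph `Δ`. -/
def stIn (G : SimpleGraph V) (Δ : Set V) (v : V) : Set V := insert v (lkIn G Δ v)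

/-- Domination computed inside the full subgraph `Δ`. -/
def leIn (G : SimpleGraph V) (Δ : Set V) (u v : V) : Prop :=
  lkIn G Δ u ⊆ stIn G Δ v

/-- The induced peripheral structure `𝒢_Δ`: proper intersections of members of `𝒢`
with `Δ`. -/
def inducedG (calG : Set (Set V)) (Δ : Set V) : Set (Set V) :=
  {Θ | ∃ Λ ∈ calG, Θ = Δ ∩ Λ ∧ Δ ∩ Λ ≠ Δ}

/-- `𝒢` is saturated: it contains every proper special subgroup invariant under
`Out⁰(A_Γ; 𝒢)`, where invariance is characterized by being upwards closed under
`≤_𝒢` and not `𝒢`-star-separated by an outside vertex. -/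
def Saturated (G : SimpleGraph V) (calG : Set (Set V)) : Prop :=
  ∀ Δ : Set V, Δ ≠ Set.univ → UpClosed G calG Δ → NotStarSep G calG Δ → Δ ∈ calG

/-- `φ` is an inversion automorphism. -/
def IsInversion (G : SimpleGraph V) (φ : MulAut (RAAG G)) : Prop :=
  ∃ v, φ (gen G v) = (gen G v)⁻¹ ∧ ∀ w, w ≠ v → φ (gen G w) = gen G w

/-- `φ` is a transvection. -/
def IsTransvection (G : SimpleGraph V) (φ : MulAut (RAAG G)) : Prop :=
  ∃ v w, v ≠ w ∧ stdLE G v w ∧ φ (gen G v) = gen G v * gen G w ∧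
    ∀ u, u ≠ v → φ (gen G u) = gen G u

/-- `φ` is an extended partial conjugation. -/
def IsEPC (G : SimpleGraph V) (φ : MulAut (RAAG G)) : Prop :=
  ∃ x K, UnionOfComps G ∅ ((st G x)ᶜ) K ∧
    (∀ w ∈ K, φ (gen G w) = gen G x * gen G w * (gen G x)⁻¹) ∧
    ∀ w ∉ K, φ (gen G w) = gen G w

/-- The subgroup `Aut⁰(A_Γ)` generated by inversions, transvections and extended
partial conjugations. -/
def Aut0 (G : SimpleGraph V) : Subgroup (MulAut (RAAG G)) :=
  Subgroup.closure {φ | IsInversion G φ ∨ IsTransvection G φ ∨ IsEPC G φ}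


/-! ### Infrastructure -/

section Infra
open scoped Classical

variable {G : SimpleGraph V} {K : Type*} [Group K]

theorem gen_commute_of_adj {v w : V} (h : G.Adj v w) : Commute (gen G v) (gen G w) := by
  have hmem : (⁅FreeGroup.of v, FreeGroup.of w⁆ : FreeGroup V) ∈
      Subgroup.normalClosure (raagRels G) :=
    Subgroup.subset_normalClosure ⟨v, w, h, rfl⟩
  have h1 : ⁅gen G v, gen G w⁆ = 1 := by
    have := (QuotientGroup.eq_one_iff (N := Subgroup.normalClosure (raagRels G))
      (⁅FreeGroup.of v, FreeGroup.of w⁆ : FreeGroup V)).2 hmem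
    calc ⁅gen G v, gen G w⁆
        = PresentedGroup.mk (raagRels G) ⁅FreeGroup.of v, FreeGroup.of w⁆ :=
          (map_commutatorElement _ _ _).symm
      _ = 1 := this
  exact commutatorElement_eq_one_iff_commute.1 h1

/-- Lift a vertex assignment satisfying the commutation relations to a homomorphism. -/
def liftHom (f : V → K) (hf : ∀ v w, G.Adj v w → Commute (f v) (f w)) : RAAG G →* K :=
  PresentedGroup.toGroup (f := f) (by
    rintro r ⟨v, w, hadj, rfl⟩
    rw [map_commutatorElement]
    simp only [FreeGroup.lift_apply_of]
    exact commutatorElement_eq_one_iff_commute.2 (hf v w hadj))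

@[simp] theorem liftHom_gen {f : V → K} {hf : ∀ v w, G.Adj v w → Commute (f v) (f w)} {v : V} :
    liftHom f hf (gen G v) = f v :=
  PresentedGroup.toGroup.of _

theorem raag_hom_ext {φ ψ : RAAG G →* K} (h : ∀ v, φ (gen G v) = ψ (gen G v)) : φ = ψ :=
  PresentedGroup.ext h

theorem sp_mono {S T : Set V} (h : S ⊆ T) : sp G S ≤ sp G T :=
  Subgroup.closure_mono (Set.image_mono h)

theorem gen_mem_sp {S : Set V} {v : V} (h : v ∈ S) : gen G v ∈ sp G S :=
  Subgroup.subset_closure ⟨v, h, rfl⟩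

theorem sp_univ : sp G Set.univ = ⊤ := by
  rw [sp, Set.image_univ]
  exact PresentedGroup.closure_range_of _

/-- The retraction of `RAAG G` onto the special subgroup on `S`. -/
noncomputable def rho (G : SimpleGraph V) (S : Set V) : RAAG G →* RAAG G :=
  liftHom (fun v => if v ∈ S then gen G v else 1) (by
    classical
    intro v w h
    by_cases hv : v ∈ S <;> by_cases hw : w ∈ S <;>
      simp [hv, hw, gen_commute_of_adj h, Commute.one_left, Commute.one_right])

theorem rho_gen_mem {S : Set V} {v : V} (h : v ∈ S) : rho G S (gen G v) = gen G v := by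
  simp [rho, h]

theorem rho_fixes_sp {S : Set V} {x : RAAG G} (h : x ∈ sp G S) : rho G S x = x := by
  induction h using Subgroup.closure_induction with
  | mem x hx => obtain ⟨v, hv, rfl⟩ := hx; exact rho_gen_mem hv
  | one => simp
  | mul a b _ _ ha hb => simp [map_mul, ha, hb]
  | inv a _ ha => simp [map_inv, ha]

theorem rho_mem_sp_inter {S T : Set V} {x : RAAG G} (h : x ∈ sp G T) :
    rho G S x ∈ sp G (S ∩ T) := by
  classical
  induction h using Subgroup.closure_induction with
  | mem x hx =>
      obtain ⟨v, hv, rfl⟩ := hx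
      by_cases hvS : v ∈ S
      · rw [rho_gen_mem hvS]; exact gen_mem_sp ⟨hvS, hv⟩
      · rw [show rho G S (gen G v) = 1 by simp [rho, hvS]]
        exact (sp G (S ∩ T)).one_mem
  | one => rw [map_one]; exact (sp G (S ∩ T)).one_mem
  | mul a b _ _ ha hb => rw [map_mul]; exact mul_mem ha hb
  | inv a _ ha => rw [map_inv]; exact inv_mem ha

theorem mem_sp_inter {S T : Set V} {x : RAAG G} (hS : x ∈ sp G S) (hT : x ∈ sp G T) :
    x ∈ sp G (S ∩ T) := by
  have := rho_mem_sp_inter (S := S) hT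
  rwa [rho_fixes_sp hS] at this

/-! ### The special subgroup as a RAAG on the induced subgraph -/

/-- The canonical map from the RAAG on an induced subgraph into the big RAAG. -/
def iota (G : SimpleGraph V) (S : Set V) : RAAG (G.induce S) →* RAAG G :=
  liftHom (fun x => gen G x.1) (fun _ _ h => gen_commute_of_adj h)

@[simp] theorem iota_gen {S : Set V} (x : S) : iota G S (gen _ x) = gen G x.1 :=
  liftHom_gen

noncomputable def rtr (G : SimpleGraph V) (S : Set V) : RAAG G →* RAAG (G.induce S) :=
  liftHom (fun v => if h : v ∈ S then gen _ ⟨v, h⟩ else 1) (by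
    intro v w h
    by_cases hv : v ∈ S
    · by_cases hw : w ∈ S
      · rw [dif_pos hv, dif_pos hw]
        exact gen_commute_of_adj (by simpa using h)
      · rw [dif_neg hw]; exact Commute.one_right _
    · rw [dif_neg hv]; exact Commute.one_left _)

theorem rtr_iota (S : Set V) : (rtr G S).comp (iota G S) = MonoidHom.id _ := by
  apply raag_hom_ext
  intro x
  simp [rtr, iota]

theorem iota_injective (S : Set V) : Function.Injective (iota G S) := by
  have h := rtr_iota (G := G) S
  intro a b hab
  have : rtr G S (iota G S a) = rtr G S (iota G S b) := by rw [hab]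
  simpa [← MonoidHom.comp_apply, h] using this

theorem iota_range (S : Set V) : (iota G S).range = sp G S := by
  rw [MonoidHom.range_eq_map, ← PresentedGroup.closure_range_of (raagRels (G.induce S)),
    MonoidHom.map_closure]
  congr 1
  show iota G S '' (Set.range (gen (G.induce S))) = gen G '' S
  rw [← Set.range_comp]
  have : (iota G S ∘ gen (G.induce S)) = fun x : S => gen G x.1 := by
    funext x; simp
  rw [this]
  rw [show (fun x : S => gen G x.1) = gen G ∘ (Subtype.val : S → V) from rfl, Set.range_comp,
    Subtype.range_coe]

theorem iota_map_sp (S : Set V) (T : Set S) :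
    (sp (G.induce S) T).map (iota G S) = sp G (Subtype.val '' T) := by
  rw [sp, MonoidHom.map_closure]
  congr 1
  rw [← Set.image_comp]
  have : (iota G S ∘ gen (G.induce S)) = gen G ∘ (Subtype.val : S → V) := by
    funext x; simp
  rw [← Set.image_comp, this, Set.image_comp]

end Infra


namespace Amalgam

open Monoid Monoid.PushoutI Monoid.PushoutI.NormalWord Monoid.CoprodI

variable {ι : Type} {Gr : ι → Type} [∀ i, Group (Gr i)] {H : Type} [Group H]
  {φ : ∀ i, H →* Gr i}

/-- Product of the "inverse-reverse" of a list of letters. -/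
theorem prod_invRev (l : List (Σ i, Gr i)) :
    (((l.map fun p => (⟨p.1, p.2⁻¹⟩ : Σ i, Gr i)).reverse).map
        fun p => (CoprodI.of p.2 : CoprodI Gr)).prod
      = ((l.map fun p => (CoprodI.of p.2 : CoprodI Gr)).prod)⁻¹ := by
  induction l with
  | nil => simp
  | cons p l ih =>
      simp only [List.map_cons, List.reverse_cons, List.map_append, List.prod_append,
        List.map_cons, List.map_nil, List.prod_cons, List.prod_nil, ih, List.prod_cons,
        mul_one, mul_inv_rev]
      simp [map_inv]

theorem reduced_map_fst_eq (hφ : ∀ i, Function.Injective (φ i)) {w₁ w₂ : Word Gr}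
    (h₁ : Reduced φ w₁) (h₂ : Reduced φ w₂)
    (h : ofCoprodI w₁.prod = ofCoprodI (φ := φ) w₂.prod) :
    w₁.toList.map Sigma.fst = w₂.toList.map Sigma.fst := by
  obtain ⟨d⟩ := transversal_nonempty φ hφ
  obtain ⟨w₁', hp₁, hm₁⟩ := h₁.exists_normalWord_prod_eq d
  obtain ⟨w₂', hp₂, hm₂⟩ := h₂.exists_normalWord_prod_eq d
  rw [← hm₁, ← hm₂, NormalWord.prod_injective (hp₁.trans (h.trans hp₂.symm))]


theorem no_conj (hφ : ∀ i, Function.Injective (φ i)) {i : ι} {w : Word Gr}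
    (hred : Reduced φ w) (hne : w.toList ≠ [])
    (hfst : ∀ l ∈ w.toList.head?, Sigma.fst l ≠ i)
    {a₁ a₂ : Gr i} (h₁r : a₁ ∉ (φ i).range) (h₂r : a₂ ∉ (φ i).range)
    (heq : (ofCoprodI w.prod)⁻¹ * of i a₁ * ofCoprodI w.prod = of (φ := φ) i a₂) :
    False := by
  classical
  set finv : (Σ j, Gr j) → (Σ j, Gr j) := fun p => ⟨p.1, p.2⁻¹⟩ with hfinv
  set invL : List (Σ j, Gr j) := (w.toList.map finv).reverse with hinvL
  have h₁1 : a₁ ≠ 1 := by rintro rfl; exact h₁r (one_mem _)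
  have h₂1 : a₂ ≠ 1 := by rintro rfl; exact h₂r (one_mem _)
  have hR : ∀ x ∈ invL.getLast?, ∀ y ∈ (⟨i, a₁⟩ :: w.toList : List (Σ j, Gr j)).head?,
      Sigma.fst x ≠ Sigma.fst y := by
    intro x hx y hy
    rw [List.head?_cons, Option.mem_some_iff] at hy
    subst hy
    rw [hinvL, List.getLast?_reverse, List.head?_map, Option.mem_map] at hx
    obtain ⟨l, hl, rfl⟩ := hx
    exact hfst l hl
  let u : Word Gr :=
    { toList := invL ++ ⟨i, a₁⟩ :: w.toList
      ne_one := by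
        intro l hl
        rw [List.mem_append, List.mem_cons] at hl
        rcases hl with hl | rfl | hl
        · rw [hinvL, List.mem_reverse, List.mem_map] at hl
          obtain ⟨p, hp, rfl⟩ := hl
          exact fun hc => w.ne_one p hp (by simpa using inv_eq_one.1 hc)
        · exact h₁1
        · exact w.ne_one l hl
      chain_ne := by
        rw [List.isChain_append]
        refine ⟨?_, ?_, hR⟩
        · rw [hinvL, List.isChain_reverse, List.isChain_map]
          exact List.IsChain.imp (fun a b h => Ne.symm h) w.chain_ne
        · rw [List.isChain_cons]
          exact ⟨fun y hy => (hfst y hy).symm, w.chain_ne⟩ }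
  have hured : Reduced φ u := by
    intro l hl
    rw [show u.toList = invL ++ ⟨i, a₁⟩ :: w.toList from rfl, List.mem_append,
      List.mem_cons] at hl
    rcases hl with hl | rfl | hl
    · rw [hinvL, List.mem_reverse, List.mem_map] at hl
      obtain ⟨p, hp, rfl⟩ := hl
      exact fun hc => hred p hp (by simpa using inv_mem (show p.2⁻¹ ∈ (φ p.1).range from hc))
    · exact h₁r
    · exact hred l hl
  have huprod : ofCoprodI (φ := φ) u.prod
      = (ofCoprodI w.prod)⁻¹ * of i a₁ * ofCoprodI w.prod := by
    have hwl : w.prod = (w.toList.map fun l => (CoprodI.of l.2 : CoprodI Gr)).prod := rfl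
    have huL : u.prod = ((invL ++ ⟨i, a₁⟩ :: w.toList).map fun l =>
        (CoprodI.of l.2 : CoprodI Gr)).prod := rfl
    rw [huL, List.map_append, List.prod_append, List.map_cons, List.prod_cons, hinvL,
      prod_invRev, hwl, map_mul, map_mul, map_inv, ofCoprodI_of, mul_assoc]
  let w2 : Word Gr :=
    { toList := [⟨i, a₂⟩]
      ne_one := by simpa using h₂1
      chain_ne := List.isChain_singleton _ }
  have h2red : Reduced φ w2 := by
    intro l hl
    rw [show w2.toList = [⟨i, a₂⟩] from rfl, List.mem_singleton] at hl
    subst hl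
    exact h₂r
  have h2prod : ofCoprodI (φ := φ) w2.prod = of i a₂ := by
    show ofCoprodI (([⟨i, a₂⟩].map fun l : (Σ j, Gr j) => CoprodI.of l.2).prod) = _
    simp [ofCoprodI_of]
  have hmap := reduced_map_fst_eq hφ hured h2red (by rw [huprod, heq, h2prod])
  rw [show u.toList = invL ++ ⟨i, a₁⟩ :: w.toList from rfl,
    show w2.toList = [⟨i, a₂⟩] from rfl] at hmap
  have hlen := congrArg List.length hmap
  have hpos : 0 < w.toList.length := List.length_pos_iff.2 hne
  simp [hinvL] at hlen
  omega

theorem core_induction (hφ : ∀ i, Function.Injective (φ i)) {i : ι} {a₀ : Gr i}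
    (ha : ∀ c : Gr i, c⁻¹ * a₀ * c ∉ (φ i).range) (w : Word Gr) :
    Reduced φ w → ∀ c₁ c₂ : Gr i,
      (ofCoprodI w.prod)⁻¹ * of i (c₁⁻¹ * a₀ * c₁) * ofCoprodI w.prod
        = of (φ := φ) i (c₂⁻¹ * a₀ * c₂) →
      ofCoprodI (φ := φ) w.prod ∈ (of (φ := φ) i).range := by
  induction w using Word.consRecOn with
  | empty => intro _ c₁ c₂ _; rw [show Word.empty.prod = (1 : CoprodI Gr) from
      Word.prod_empty, map_one]; exact one_mem _
  | cons k g w hIdx hg1 ih =>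
    intro hred c₁ c₂ heq
    have htl : (Word.cons g w hIdx hg1).toList = ⟨k, g⟩ :: w.toList := rfl
    have hredw : Reduced φ w := by
      intro l hl; exact hred l (by rw [htl]; exact List.mem_cons_of_mem _ hl)
    have hgr : g ∉ (φ k).range := hred ⟨k, g⟩ (by rw [htl]; exact List.mem_cons_self)
    have hprodc : ofCoprodI (φ := φ) (Word.cons g w hIdx hg1).prod
        = of k g * ofCoprodI w.prod := by
      rw [Word.prod_cons, map_mul, ofCoprodI_of]
    rcases eq_or_ne k i with rfl | hki
    · have heq' : (ofCoprodI (φ := φ) w.prod)⁻¹ * of k ((c₁ * g)⁻¹ * a₀ * (c₁ * g)) *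
          ofCoprodI w.prod = of (φ := φ) k (c₂⁻¹ * a₀ * c₂) := by
        rw [← heq, hprodc]
        simp only [map_mul, map_inv, mul_inv_rev]
        group
      obtain ⟨x, hx⟩ := ih hredw (c₁ * g) c₂ heq'
      exact ⟨g * x, by rw [map_mul, hx, hprodc]⟩
    · exfalso
      refine no_conj hφ hred (by rw [htl]; exact List.cons_ne_nil _ _) ?_
        (ha c₁) (ha c₂) heq
      intro l hl
      rw [htl, List.head?_cons, Option.mem_some_iff] at hl
      subst hl
      exact hki


theorem exists_base_mul_reduced (hφ : ∀ i, Function.Injective (φ i)) (z : PushoutI φ) :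
    ∃ (h : H) (w : Word Gr), Reduced φ w ∧ z = base φ h * ofCoprodI w.prod := by
  classical
  obtain ⟨d⟩ := transversal_nonempty φ hφ
  set n : NormalWord d := z • NormalWord.empty with hn
  have hprod : n.prod = z := by
    rw [hn, NormalWord.prod_smul, NormalWord.prod_empty, mul_one]
  refine ⟨n.head, n.toWord, ?_, ?_⟩
  · intro g hg
    have hset := n.normalized g.1 g.2 (by simpa using hg)
    have hne := n.ne_one g hg
    rintro ⟨y, hy⟩
    have hinj := (d.compl g.1).1
    have : (⟨⟨g.2, ⟨y, hy⟩⟩, ⟨1, d.one_mem g.1⟩⟩ :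
        ((φ g.1).range : Set (Gr g.1)) × d.set g.1) =
        ⟨⟨1, Subgroup.one_mem _⟩, ⟨g.2, hset⟩⟩ := by
      apply hinj
      show g.2 * 1 = 1 * g.2
      rw [mul_one, one_mul]
    exact hne (congrArg (fun p => (p.1 : Gr g.1)) this)
  · rw [← hprod]; rfl

theorem mem_range_of_commute (hφ : ∀ i, Function.Injective (φ i)) {i : ι} {a₀ : Gr i}
    (ha : ∀ c : Gr i, c⁻¹ * a₀ * c ∉ (φ i).range) {z : PushoutI φ}
    (hz : z * of i a₀ = of i a₀ * z) : z ∈ (of (φ := φ) i).range := by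
  obtain ⟨h, w, hred, rfl⟩ := exists_base_mul_reduced hφ z
  have hbase : base φ h = of i (φ i h) := (of_apply_eq_base φ i h).symm
  have key : (ofCoprodI (φ := φ) w.prod)⁻¹ * of i ((φ i h)⁻¹ * a₀ * (φ i h)) *
      ofCoprodI w.prod = of (φ := φ) i ((1 : Gr i)⁻¹ * a₀ * 1) := by
    rw [hbase] at hz
    have h5 : (of (φ := φ) i (φ i h) * ofCoprodI w.prod)⁻¹ *
        (of i a₀ * (of i (φ i h) * ofCoprodI w.prod)) = of (φ := φ) i a₀ := by
      rw [← hz]; group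
    calc (ofCoprodI (φ := φ) w.prod)⁻¹ * of i ((φ i h)⁻¹ * a₀ * (φ i h)) *
        ofCoprodI w.prod
        = (of (φ := φ) i (φ i h) * ofCoprodI w.prod)⁻¹ *
          (of i a₀ * (of i (φ i h) * ofCoprodI w.prod)) := by
          simp only [map_mul, map_inv]; group
      _ = of (φ := φ) i a₀ := h5
      _ = of (φ := φ) i ((1 : Gr i)⁻¹ * a₀ * 1) := by rw [inv_one, one_mul, mul_one]
  have hW := core_induction hφ ha w hred (φ i h) 1 key
  obtain ⟨x, hx⟩ := hW
  exact ⟨φ i h * x, by rw [map_mul, hx, hbase]⟩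

end Amalgam

section Decomp

open Monoid Monoid.PushoutI
open scoped Classical

variable {V : Type} (G : SimpleGraph V) (v : V)

/-- The two-element family for the amalgam decomposition of a RAAG at the vertex `v`:
`A = RAAG (Γ - v)` and `B = RAAG (st v)`, glued over `C = RAAG (lk v)`. -/
def Gfam (b : Bool) : Type := cond b (RAAG (G.induce {u | u ≠ v})) (RAAG (G.induce (st G v)))

instance GfamGroup : ∀ b, Group (Gfam G v b) := fun b => by
  cases b
  · exact (inferInstance : Group (RAAG (G.induce (st G v))))
  · exact (inferInstance : Group (RAAG (G.induce {u | u ≠ v})))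

theorem mem_ne_of_lk {u : V} (hu : u ∈ lk G v) : u ≠ v :=
  (show G.Adj v u from hu).ne'

def mapA : RAAG (G.induce (lk G v)) →* RAAG (G.induce {u | u ≠ v}) :=
  liftHom (fun x => gen _ ⟨x.1, mem_ne_of_lk G v x.2⟩)
    (fun x y h => gen_commute_of_adj (by simpa using h))

def mapB : RAAG (G.induce (lk G v)) →* RAAG (G.induce (st G v)) :=
  liftHom (fun x => gen _ ⟨x.1, Set.mem_insert_of_mem _ x.2⟩)
    (fun x y h => gen_commute_of_adj (by simpa using h))

def phiFam : ∀ b, RAAG (G.induce (lk G v)) →* Gfam G v b := fun b =>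
  match b with
  | true => mapA G v
  | false => mapB G v

theorem mapA_gen (x : lk G v) :
    mapA G v (gen _ x) = gen (G.induce {u | u ≠ v}) ⟨x.1, mem_ne_of_lk G v x.2⟩ :=
  liftHom_gen

theorem mapB_gen (x : lk G v) :
    mapB G v (gen _ x) = gen (G.induce (st G v)) ⟨x.1, Set.mem_insert_of_mem _ x.2⟩ :=
  liftHom_gen

theorem bridge {u : V} (hu : u ∈ lk G v) :
    of (φ := phiFam G v) true (gen (G.induce {u | u ≠ v}) ⟨u, mem_ne_of_lk G v hu⟩)
      = of (φ := phiFam G v) false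
          (gen (G.induce (st G v)) ⟨u, Set.mem_insert_of_mem _ hu⟩) := by
  have h1 : phiFam G v true (gen (G.induce (lk G v)) ⟨u, hu⟩)
      = gen (G.induce {u | u ≠ v}) ⟨u, mem_ne_of_lk G v hu⟩ := mapA_gen G v ⟨u, hu⟩
  have h2 : phiFam G v false (gen (G.induce (lk G v)) ⟨u, hu⟩)
      = gen (G.induce (st G v)) ⟨u, Set.mem_insert_of_mem _ hu⟩ := mapB_gen G v ⟨u, hu⟩
  rw [← h1, ← h2, of_apply_eq_base, of_apply_eq_base]

noncomputable def Phi : RAAG G →* PushoutI (phiFam G v) :=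
  liftHom (fun u => if h : u = v
      then of (φ := phiFam G v) false (gen _ ⟨v, Set.mem_insert _ _⟩)
      else of (φ := phiFam G v) true (gen _ ⟨u, h⟩)) (by
    intro x y h
    have hxy : x ≠ y := (SimpleGraph.Adj.ne h)
    by_cases hx : x = v
    · have hadj : G.Adj v y := by rw [← hx]; exact h
      have hy : y ∈ lk G v := hadj
      rw [dif_pos hx, dif_neg (fun hc : y = v => hxy (hx.trans hc.symm))]
      rw [bridge G v hy]
      exact ((gen_commute_of_adj (v := (⟨v, Set.mem_insert _ _⟩ : st G v))
        (w := ⟨y, Set.mem_insert_of_mem _ hy⟩) (by simpa using hadj))).map _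
    · by_cases hy : y = v
      · have hadj : G.Adj v x := by rw [← hy]; exact h.symm
        have hx' : x ∈ lk G v := hadj
        rw [dif_pos hy, dif_neg hx]
        rw [bridge G v hx']
        exact (((gen_commute_of_adj (v := (⟨v, Set.mem_insert _ _⟩ : st G v))
          (w := ⟨x, Set.mem_insert_of_mem _ hx'⟩) (by simpa using hadj))).map _).symm
      · rw [dif_neg hx, dif_neg hy]
        exact (gen_commute_of_adj (by simpa using h)).map _)

noncomputable def Psi : PushoutI (phiFam G v) →* RAAG G :=
  PushoutI.lift (fun b =>
    match b with
    | true => iota G {u | u ≠ v}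
    | false => iota G (st G v)) (iota G (lk G v)) (by
      intro b
      cases b
      · apply raag_hom_ext; intro x
        show iota G (st G v) (mapB G v (gen _ x)) = gen G x.1
        rw [mapB_gen G v x]
        exact iota_gen _
      · apply raag_hom_ext; intro x
        show iota G {u | u ≠ v} (mapA G v (gen _ x)) = gen G x.1
        rw [mapA_gen G v x]
        exact iota_gen _)

theorem Psi_Phi (x : RAAG G) : Psi G v (Phi G v x) = x := by
  have : (Psi G v).comp (Phi G v) = MonoidHom.id _ := by
    apply raag_hom_ext
    intro u
    simp only [MonoidHom.comp_apply, MonoidHom.id_apply, Phi, liftHom_gen]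
    by_cases h : u = v
    · rw [dif_pos h, h]
      show Psi G v (of (φ := phiFam G v) false _) = _
      exact (PushoutI.lift_of _ _ _ _).trans (iota_gen _)
    · rw [dif_neg h]
      show Psi G v (of (φ := phiFam G v) true _) = _
      exact (PushoutI.lift_of _ _ _ _).trans (iota_gen _)
  calc Psi G v (Phi G v x) = ((Psi G v).comp (Phi G v)) x := rfl
    _ = x := by rw [this]; rfl

theorem phiFam_injective : ∀ b, Function.Injective (phiFam G v b) := by
  intro b
  have key : ∀ (S : Set V) (f : RAAG (G.induce (lk G v)) →* RAAG (G.induce S)),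
      ((iota G S).comp f = iota G (lk G v)) → Function.Injective f := by
    intro S f hf x y hxy
    apply iota_injective (G := G) (lk G v)
    rw [← hf]
    simp only [MonoidHom.comp_apply, hxy]
  cases b
  · exact key (st G v) (mapB G v) (by
      apply raag_hom_ext; intro x
      simp only [MonoidHom.comp_apply]
      rw [mapB_gen G v x]
      rw [iota_gen, iota_gen])
  · exact key {u | u ≠ v} (mapA G v) (by
      apply raag_hom_ext; intro x
      simp only [MonoidHom.comp_apply]
      rw [mapA_gen G v x]
      rw [iota_gen, iota_gen])

/-- Key step: if `z` commutes with `gen w` and `v ∉ st w`, then `z ∈ A_{V - v}`. -/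
theorem mem_sp_compl_of_commute {w : V} (hw : v ∉ st G w) {z : RAAG G}
    (hz : Commute z (gen G w)) : z ∈ sp G {u | u ≠ v} := by
  classical
  have hwv : w ≠ v := by rintro rfl; exact hw (Set.mem_insert _ _)
  have hnadj : ¬ G.Adj w v := fun hc => hw (Set.mem_insert_of_mem _ hc)
  set a₀ : RAAG (G.induce {u | u ≠ v}) := gen _ ⟨w, hwv⟩ with ha₀
  -- the exponent-sum homomorphism detecting `w`
  set e : RAAG (G.induce {u | u ≠ v}) →* Multiplicative ℤ :=
    liftHom (fun x => if x.1 = w then Multiplicative.ofAdd (1 : ℤ) else 1)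
      (fun _ _ _ => Commute.all _ _) with he
  have hea : e a₀ = Multiplicative.ofAdd (1 : ℤ) := by
    rw [ha₀, he, liftHom_gen, if_pos rfl]
  have heA : ∀ y, e (mapA G v y) = 1 := by
    have : e.comp (mapA G v) = 1 := by
      apply raag_hom_ext
      intro x
      simp only [MonoidHom.comp_apply, MonoidHom.one_apply]
      rw [mapA_gen G v x]
      rw [he, liftHom_gen, if_neg]
      intro hc
      exact hnadj (by
        have : G.Adj v x.1 := x.2
        rw [hc] at this
        exact this.symm)
    intro y
    calc e (mapA G v y) = (e.comp (mapA G v)) y := rfl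
      _ = 1 := by rw [this]; rfl
  have ha : ∀ c : RAAG (G.induce {u | u ≠ v}),
      c⁻¹ * a₀ * c ∉ (phiFam G v true).range := by
    rintro c ⟨y, hy⟩
    have h6 : e (c⁻¹ * a₀ * c) = Multiplicative.ofAdd (1 : ℤ) := by
      rw [map_mul, map_mul, map_inv, hea]
      rw [mul_comm (e c)⁻¹ _, mul_assoc, inv_mul_cancel, mul_one]
    rw [show phiFam G v true y = mapA G v y from rfl] at hy
    rw [← hy, heA] at h6
    have h7 := Multiplicative.ofAdd.injective (h6.symm.trans (ofAdd_zero (α := ℤ)).symm)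
    exact one_ne_zero h7
  have hz' : Phi G v z * of (φ := phiFam G v) true a₀
      = of (φ := phiFam G v) true a₀ * Phi G v z := by
    have hgw : Phi G v (gen G w) = of (φ := phiFam G v) true a₀ := by
      rw [Phi, liftHom_gen, dif_neg hwv]
    have := hz.map (Phi G v)
    rw [hgw] at this
    exact this
  have ha' : ∀ c : Gfam G v true,
      c⁻¹ * (show Gfam G v true from a₀) * c ∉ (phiFam G v true).range := ha
  obtain ⟨x, hx⟩ := Amalgam.mem_range_of_commute (phiFam_injective G v) ha' hz'
  rw [← Psi_Phi G v z, ← hx]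
  have : Psi G v (of (φ := phiFam G v) true x) = iota G {u | u ≠ v} x := by
    rw [Psi, PushoutI.lift_of]
    rfl
  rw [this, ← iota_range]
  exact ⟨x, rfl⟩

end Decomp

section Main

open scoped Classical

/-- Servatius-type lemma: the centralizer of a generator lies in the special
subgroup on its star. -/
theorem commute_gen_mem_sp_st : ∀ (n : ℕ) (V : Type) [Fintype V] (G : SimpleGraph V),
    Fintype.card V ≤ n → ∀ (w : V) (z : RAAG G),
      Commute z (gen G w) → z ∈ sp G (st G w) := by
  intro n
  induction n with
  | zero =>
      intro V _ G hcard w z hz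
      have : IsEmpty V := Fintype.card_eq_zero_iff.1 (Nat.le_zero.1 hcard)
      exact this.elim w
  | succ n ih =>
      intro V _ G hcard w z hz
      by_cases hst : st G w = Set.univ
      · rw [hst, sp_univ]; trivial
      · obtain ⟨v, hv⟩ : ∃ v, v ∉ st G w := by
          by_contra hc
          push_neg at hc
          exact hst (Set.eq_univ_of_forall hc)
        have h1 : z ∈ sp G {u | u ≠ v} := mem_sp_compl_of_commute G v hv hz
        rw [← iota_range] at h1
        obtain ⟨z', hz'⟩ := h1
        have hwv : w ≠ v := fun hc => hv (hc ▸ Set.mem_insert _ _)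
        have hcomm : Commute z' (gen (G.induce {u | u ≠ v}) ⟨w, hwv⟩) := by
          have hinj := iota_injective (G := G) {u | u ≠ v}
          have : z' * gen (G.induce {u | u ≠ v}) ⟨w, hwv⟩
              = gen (G.induce {u | u ≠ v}) ⟨w, hwv⟩ * z' := by
            apply hinj
            rw [map_mul, map_mul, hz', iota_gen]
            exact hz
          exact this
        have hcard' : Fintype.card {u // u ≠ v} ≤ n := by
          have h5 := Fintype.card_subtype_lt (p := fun u : V => u ≠ v) (x := v) (by simp)
          have h6 : Fintype.card {x // (fun u : V => u ≠ v) x} = Fintype.card {u // u ≠ v} := rfl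
          omega
        have h2 := ih {u // u ≠ v} (G.induce {u | u ≠ v}) hcard' ⟨w, hwv⟩ z' hcomm
        have h3 : z ∈ (sp (G.induce {u | u ≠ v})
            (st (G.induce {u | u ≠ v}) ⟨w, hwv⟩)).map (iota G {u | u ≠ v}) :=
          ⟨z', h2, hz'⟩
        rw [iota_map_sp] at h3
        refine sp_mono ?_ h3
        rintro _ ⟨x, hx, rfl⟩
        rcases hx with hx | hx
        · rw [hx]
          exact Set.mem_insert _ _
        · exact Set.mem_insert_of_mem _ (show G.Adj w x.1 from hx)

/-- The center of a special subgroup `A_Δ` is `A_{Z(Δ)}`, where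
`Z(Δ)` consists of the vertices of `Δ` adjacent to every other vertex of `Δ`. -/
theorem center_special_subgroup [Fintype V] (G : SimpleGraph V) (Δ : Set V) :
    (Subgroup.center ↥(sp G Δ)).map (sp G Δ).subtype =
      sp G {v ∈ Δ | ∀ w ∈ Δ, w ≠ v → G.Adj v w} := by
  apply le_antisymm
  · rintro x ⟨c, hc, rfl⟩
    have hmem : ((sp G Δ).subtype c : RAAG G) ∈ sp G Δ := c.2
    have hcomm : ∀ w ∈ Δ, Commute ((sp G Δ).subtype c : RAAG G) (gen G w) := by
      intro w hw
      have h1 := (Subgroup.mem_center_iff.1 hc) ⟨gen G w, gen_mem_sp hw⟩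
      have h2 := congrArg ((sp G Δ).subtype) h1
      simp only [map_mul] at h2
      exact h2.symm
    have hstar : ∀ w ∈ Δ, ((sp G Δ).subtype c : RAAG G) ∈ sp G (st G w) := fun w hw =>
      commute_gen_mem_sp_st (Fintype.card V) V G le_rfl w _ (hcomm w hw)
    have key : ∀ F : Finset V, (∀ w ∈ F, w ∈ Δ) →
        ((sp G Δ).subtype c : RAAG G) ∈ sp G (Δ ∩ ⋂ w ∈ F, st G w) := by
      intro F
      induction F using Finset.induction_on with
      | empty =>
          intro _
          have : (Δ ∩ ⋂ w ∈ (∅ : Finset V), st G w) = Δ := by simp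
          rw [this]; exact hmem
      | insert a F' ha ih =>
          intro hsub
          have h3 := ih (fun w hw => hsub w (Finset.mem_insert_of_mem hw))
          have h4 := hstar a (hsub a (Finset.mem_insert_self _ _))
          have h5 := mem_sp_inter h3 h4
          refine sp_mono ?_ h5
          rintro y ⟨⟨hyΔ, hyF⟩, hya⟩
          refine ⟨hyΔ, ?_⟩
          simp only [Set.mem_iInter] at hyF ⊢
          intro j hj
          rcases Finset.mem_insert.1 hj with rfl | hj
          · exact hya
          · exact hyF j hj
    have hfin := key Δ.toFinset (fun w hw => (Set.mem_toFinset).1 hw)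
    refine sp_mono ?_ hfin
    rintro y ⟨hyΔ, hyI⟩
    refine ⟨hyΔ, ?_⟩
    intro w hw hne
    simp only [Set.mem_iInter] at hyI
    have := hyI w ((Set.mem_toFinset).2 hw)
    rcases this with h | h
    · exact absurd h.symm hne
    · exact (show G.Adj w y from h).symm
  · rw [sp, Subgroup.closure_le]
    rintro _ ⟨u, ⟨huΔ, hu⟩, rfl⟩
    refine ⟨⟨gen G u, gen_mem_sp huΔ⟩, Subgroup.mem_center_iff.2 ?_, rfl⟩
    intro g
    have hcent : ∀ y ∈ sp G Δ, Commute y (gen G u) := by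
      intro y hy
      induction hy using Subgroup.closure_induction with
      | mem a ha =>
          obtain ⟨w, hw, rfl⟩ := ha
          rcases eq_or_ne w u with rfl | hne
          · exact Commute.refl _
          · exact (gen_commute_of_adj (hu w hw hne)).symm
      | one => exact Commute.one_left _
      | mul a b _ _ iha ihb => exact iha.mul_left ihb
      | inv a _ iha => exact iha.inv_left
    exact Subtype.ext (hcent g.1 g.2)

end Main


end RAAGPaper
end

section
/- Let Γ be a finite simple graph with vertices v, w satisfying lk(v) ⊆ st(w) (so the transvection ρ^w_v sending v to vw is a well-defined automorphism of A_Γ). For a full subgraph Δ of Γ, the automorphism ρ^w_v preserves A_Δ up to conjugacy if and only if v ∉ Δ, or both v and w lie in Δ. -/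
/-! Basic definitions: right-angled Artin groups, special subgroups,
relative automorphism notions, and graph-theoretic notions from
Day–Wade, "Relative automorphism groups of right-angled Artin groups". -/

namespace RAAGPaper

variable {V : Type}

open scoped commutatorElement

/-- Abelianization map to the free abelian group on `V`. -/
noncomputable def abmap (G : SimpleGraph V) : RAAG G →* Multiplicative (V →₀ ℤ) :=
  PresentedGroup.toGroup (f := fun u => Multiplicative.ofAdd (Finsupp.single u 1)) (by
    rintro r ⟨a, b, hab, rfl⟩
    rw [map_commutatorElement]
    exact commutatorElement_eq_one_iff_mul_comm.mpr (mul_comm _ _))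

@[simp] theorem abmap_gen (G : SimpleGraph V) (u : V) :
    abmap G (gen G u) = Multiplicative.ofAdd (Finsupp.single u 1) :=
  PresentedGroup.toGroup.of _

theorem not_preserves (G : SimpleGraph V) (v w : V) (hvw : v ≠ w)
    (ρ : MulAut (RAAG G))
    (h1 : ρ (gen G v) = gen G v * gen G w)
    (Δ : Set V) (hv : v ∈ Δ) (hw : w ∉ Δ) (hP : Preserves ρ (sp G Δ)) : False := by
  obtain ⟨g, hg⟩ := hP
  set F : RAAG G →* Multiplicative ℤ :=
    (AddMonoidHom.toMultiplicative (Finsupp.applyAddHom w)).comp (abmap G) with hF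
  have hker : sp G Δ ≤ F.ker := by
    rw [sp, Subgroup.closure_le]
    rintro _ ⟨u, hu, rfl⟩
    have huw : u ≠ w := fun h => hw (h ▸ hu)
    simp [hF, MonoidHom.mem_ker, Finsupp.single_apply, huw]
  have hmem : ρ (gen G v) ∈ Subgroup.map ρ.toMonoidHom (sp G Δ) :=
    ⟨gen G v, Subgroup.subset_closure ⟨v, hv, rfl⟩, rfl⟩
  rw [hg] at hmem
  obtain ⟨y, hy, hyx⟩ := hmem
  have h3 : F (ρ (gen G v)) = 1 := by
    rw [← hyx]
    simp only [MulEquiv.coe_toMonoidHom, MulAut.conj_apply, map_mul, map_inv]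
    rw [mul_comm (F g) (F y), mul_assoc, mul_inv_cancel, mul_one]
    exact hker hy
  rw [h1] at h3
  simp [hF, Finsupp.single_apply, hvw] at h3

theorem map_conj_one {A : Type*} [Group A] (H : Subgroup A) :
    Subgroup.map (MulAut.conj (1 : A)).toMonoidHom H = H := by
  ext x
  simp [Subgroup.mem_map, MulAut.conj_apply]

/-- The transvection `ρ^w_v` preserves `A_Δ` up to conjugacy iff
`v ∉ Δ` or both `v, w ∈ Δ`. -/
theorem transvection_preserves_iff [Fintype V] (G : SimpleGraph V) (v w : V)
    (hvw : v ≠ w) (hle : stdLE G v w)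
    (ρ : MulAut (RAAG G))
    (h1 : ρ (gen G v) = gen G v * gen G w)
    (h2 : ∀ u, u ≠ v → ρ (gen G u) = gen G u)
    (Δ : Set V) :
    Preserves ρ (sp G Δ) ↔ (v ∉ Δ ∨ (v ∈ Δ ∧ w ∈ Δ)) := by
  constructor
  · intro hP
    by_cases hv : v ∈ Δ
    · by_cases hw : w ∈ Δ
      · exact Or.inr ⟨hv, hw⟩
      · exact absurd hP (fun h => not_preserves G v w hvw ρ h1 Δ hv hw h)
    · exact Or.inl hv
  · intro hcase
    refine ⟨1, ?_⟩
    rw [map_conj_one]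
    rcases hcase with hv | ⟨hv, hw⟩
    · -- v ∉ Δ : ρ fixes all generators of A_Δ
      rw [sp, MonoidHom.map_closure]
      congr 1
      apply Set.image_congr (g := id) (fun x hx => ?_) |>.trans (Set.image_id _)
      obtain ⟨u, hu, rfl⟩ := hx
      exact h2 u (fun h => hv (h ▸ hu))
    · -- v, w ∈ Δ
      apply le_antisymm
      · rw [sp, MonoidHom.map_closure, Subgroup.closure_le]
        rintro _ ⟨_, ⟨u, hu, rfl⟩, rfl⟩
        by_cases huv : u = v
        · subst huv
          rw [MulEquiv.coe_toMonoidHom, h1]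
          exact mul_mem (Subgroup.subset_closure ⟨u, hv, rfl⟩)
            (Subgroup.subset_closure ⟨w, hw, rfl⟩)
        · rw [MulEquiv.coe_toMonoidHom, h2 u huv]
          exact Subgroup.subset_closure ⟨u, hu, rfl⟩
      · rw [sp, Subgroup.closure_le]
        rintro _ ⟨u, hu, rfl⟩
        by_cases huv : u = v
        · subst huv
          refine ⟨gen G u * (gen G w)⁻¹,
            mul_mem (Subgroup.subset_closure ⟨u, hu, rfl⟩)
              (inv_mem (Subgroup.subset_closure ⟨w, hw, rfl⟩)), ?_⟩
          rw [MulEquiv.coe_toMonoidHom, map_mul, map_inv, h1, h2 w (Ne.symm hvw),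
            mul_inv_cancel_right]
        · exact ⟨gen G u, Subgroup.subset_closure ⟨u, hu, rfl⟩, h2 u huv⟩

end RAAGPaper
end

section
/- Let Γ be a finite simple graph, x a vertex, and K a union of connected components of Γ − st(x). The extended partial conjugation π^x_K (conjugating each vertex in K by x and fixing all other vertices) acts trivially on a special subgroup A_Δ if and only if K ∩ Δ = ∅ or Δ − st(x) ⊆ K. -/
/-! Basic definitions: right-angled Artin groups, special subgroups,
relative automorphism notions, and graph-theoretic notions from
Day–Wade, "Relative automorphism groups of right-angled Artin groups". -/

open scoped commutatorElement

namespace RAAGPaper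

variable {V : Type}

/-- If two vertices are adjacent, the corresponding generators commute. -/
lemma gen_comm {G : SimpleGraph V} {a b : V} (h : G.Adj a b) :
    gen G a * gen G b = gen G b * gen G a := by
  have hmem : (⁅FreeGroup.of a, FreeGroup.of b⁆ : FreeGroup V) ∈
      Subgroup.normalClosure (raagRels G) :=
    Subgroup.subset_normalClosure ⟨a, b, h, rfl⟩
  have h1 : (QuotientGroup.mk ⁅FreeGroup.of a, FreeGroup.of b⁆ :
      PresentedGroup (raagRels G)) = 1 := (QuotientGroup.eq_one_iff _).2 hmem
  have h2 : (⁅gen G a, gen G b⁆ : RAAG G) = 1 := h1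
  exact commutatorElement_eq_one_iff_mul_comm.1 h2

/-- If `π` conjugates every generator of `Δ` by `g`, it acts as conjugation by `g`
on all of `sp G Δ`. -/
lemma actsTrivially_of_gens {G : SimpleGraph V} (π : MulAut (RAAG G)) (Δ : Set V)
    (g : RAAG G) (h : ∀ v ∈ Δ, π (gen G v) = g * gen G v * g⁻¹) :
    ActsTrivially π (sp G Δ) := by
  refine ⟨g, fun h' hh' => ?_⟩
  refine Subgroup.closure_induction (p := fun z _ => π z = g * z * g⁻¹) ?_ ?_ ?_ ?_ hh'
  · rintro y ⟨v, hv, rfl⟩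
    exact h v hv
  · simp
  · intro a b _ _ ha hb
    rw [map_mul, ha, hb]
    group
  · intro a _ ha
    rw [map_inv, ha]
    group

/-- The detecting map to `Perm (Fin 4)`. -/
noncomputable def fmap (x u v w : V) : Equiv.Perm (Fin 4) :=
  haveI := Classical.decEq V
  if w = x then Equiv.swap 1 2 else if w = u then Equiv.swap 2 3
    else if w = v then Equiv.swap 0 1 else 1

/-- The extended partial conjugation `π^x_K` acts trivially on a
special subgroup `A_Δ` iff `K ∩ Δ = ∅` or `Δ - st(x) ⊆ K`. -/
theorem epc_acts_trivially_iff [Fintype V] (G : SimpleGraph V) (x : V) (K : Set V)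
    (hK : UnionOfComps G ∅ ((st G x)ᶜ) K)
    (π : MulAut (RAAG G))
    (h1 : ∀ w ∈ K, π (gen G w) = gen G x * gen G w * (gen G x)⁻¹)
    (h2 : ∀ w ∉ K, π (gen G w) = gen G w)
    (Δ : Set V) :
    ActsTrivially π (sp G Δ) ↔ (K ∩ Δ = ∅ ∨ Δ \ st G x ⊆ K) := by
  classical
  constructor
  · rintro ⟨g, hg⟩
    by_contra hcon
    push_neg at hcon
    obtain ⟨hKΔ, hsub⟩ := hcon
    obtain ⟨u, huK, huΔ⟩ := hKΔ
    rw [Set.not_subset] at hsub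
    obtain ⟨v, hvΔ', hvK⟩ := hsub
    obtain ⟨hvΔ, hvst⟩ := hvΔ'
    have hust : u ∈ (st G x)ᶜ := hK.1 huK
    have hvst' : v ∈ (st G x)ᶜ := hvst
    have hxu : ¬ G.Adj x u := fun h => hust (Set.mem_insert_iff.2 (Or.inr h))
    have hxv : ¬ G.Adj x v := fun h => hvst' (Set.mem_insert_iff.2 (Or.inr h))
    have hux : u ≠ x := fun h => hust (by rw [h]; exact Set.mem_insert x _)
    have hvx : v ≠ x := fun h => hvst' (by rw [h]; exact Set.mem_insert x _)
    have hvu : v ≠ u := fun h => hvK (by rw [h]; exact huK)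
    have huv : ¬ G.Adj u v := fun h =>
      hvK (hK.2 u huK v (Relation.ReflTransGen.single ⟨hust, hvst', Or.inl h⟩))
    -- the detecting homomorphism
    have hlift : ∀ r ∈ raagRels G, FreeGroup.lift (fmap x u v) r = 1 := by
      rintro r ⟨w1, w2, hadj, rfl⟩
      have key : fmap x u v w1 = 1 ∨ fmap x u v w2 = 1 := by
        by_contra hc
        push_neg at hc
        have m1 : w1 = x ∨ w1 = u ∨ w1 = v := by
          by_contra h'
          push_neg at h'
          exact hc.1 (by simp [fmap, h'.1, h'.2.1, h'.2.2])
        have m2 : w2 = x ∨ w2 = u ∨ w2 = v := by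
          by_contra h'
          push_neg at h'
          exact hc.2 (by simp [fmap, h'.1, h'.2.1, h'.2.2])
        rcases m1 with rfl | rfl | rfl <;> rcases m2 with rfl | rfl | rfl
        · exact G.loopless.irrefl _ hadj
        · exact hxu hadj
        · exact hxv hadj
        · exact hxu hadj.symm
        · exact G.loopless.irrefl _ hadj
        · exact huv hadj
        · exact hxv hadj.symm
        · exact huv hadj.symm
        · exact G.loopless.irrefl _ hadj
      have h12 : fmap x u v w1 * fmap x u v w2 = fmap x u v w2 * fmap x u v w1 := by
        rcases key with h | h <;> simp [h]
      simp [commutatorElement_def, FreeGroup.lift_apply_of]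
      rw [h12]
      group
    set φ := PresentedGroup.toGroup hlift with hφ
    have φx : φ (gen G x) = Equiv.swap 1 2 := by
      rw [gen, PresentedGroup.toGroup.of]; simp [fmap]
    have φu : φ (gen G u) = Equiv.swap 2 3 := by
      rw [gen, PresentedGroup.toGroup.of]; simp [fmap, hux]
    have φv : φ (gen G v) = Equiv.swap 0 1 := by
      rw [gen, PresentedGroup.toGroup.of]; simp [fmap, hvx, hvu]
    have t1 : g * gen G u * g⁻¹ = gen G x * gen G u * (gen G x)⁻¹ :=
      (hg _ (Subgroup.subset_closure ⟨u, huΔ, rfl⟩)).symm.trans (h1 u huK)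
    have t2 : g * gen G v * g⁻¹ = gen G v :=
      (hg _ (Subgroup.subset_closure ⟨v, hvΔ, rfl⟩)).symm.trans (h2 v hvK)
    have c1 : φ g * Equiv.swap 2 3 * (φ g)⁻¹ =
        Equiv.swap 1 2 * Equiv.swap 2 3 * (Equiv.swap 1 2)⁻¹ := by
      have := congrArg φ t1
      simpa [map_mul, map_inv, φx, φu] using this
    have c2 : φ g * Equiv.swap 0 1 * (φ g)⁻¹ = Equiv.swap 0 1 := by
      have := congrArg φ t2
      simpa [map_mul, map_inv, φv] using this
    have keyfin : ∀ p : Equiv.Perm (Fin 4),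
        p * Equiv.swap 0 1 * p⁻¹ = Equiv.swap 0 1 →
        p * Equiv.swap 2 3 * p⁻¹ = Equiv.swap 1 2 * Equiv.swap 2 3 * (Equiv.swap 1 2)⁻¹ →
        False := by decide
    exact keyfin (φ g) c2 c1
  · rintro (hemp | hsub)
    · refine actsTrivially_of_gens π Δ 1 fun w hw => ?_
      have hwK : w ∉ K := fun h =>
        (Set.eq_empty_iff_forall_notMem.1 hemp w) ⟨h, hw⟩
      rw [h2 w hwK]
      group
    · refine actsTrivially_of_gens π Δ (gen G x) fun w hw => ?_
      by_cases hwK : w ∈ K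
      · exact h1 w hwK
      · have hwst : w ∈ st G x := by
          by_contra h
          exact hwK (hsub ⟨hw, h⟩)
        rw [h2 w hwK]
        rcases hwst with rfl | hlk
        · group
        · have := gen_comm (G := G) (a := x) (b := w) hlk
          rw [this]
          group

end RAAGPaper
end

section
/- Let Γ be a finite simple graph, x a vertex, u and v vertices of Γ − st(x) lying in distinct connected components K and K' of Γ − st(x). Then the commutator [u,v] is a nontrivial cyclically reduced element of A_Γ, and π^x_K([u,v]) = [xux^{-1}, v] is not conjugate to [u,v] in A_Γ. -/
/-! Basic definitions: right-angled Artin groups, special subgroups,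
relative automorphism notions, and graph-theoretic notions from
Day–Wade, "Relative automorphism groups of right-angled Artin groups". -/

namespace RAAGPaper

open scoped commutatorElement

variable {V : Type}

/-! ### Auxiliary machinery for Statement 5 -/

section Aux5

variable {G : SimpleGraph V}

lemma raag_rels_one {H : Type*} [Group H] {f : V → H}
    (hf : ∀ a b, G.Adj a b → Commute (f a) (f b)) :
    ∀ r ∈ raagRels G, FreeGroup.lift f r = 1 := by
  rintro r ⟨a, b, hab, rfl⟩
  rw [map_commutatorElement, FreeGroup.lift_apply_of, FreeGroup.lift_apply_of]
  exact commutatorElement_eq_one_iff_commute.mpr (hf a b hab)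

/-- The homomorphism from a RAAG induced by a vertex map with commuting images
on edges. -/
noncomputable def raagHom {H : Type*} [Group H] (f : V → H)
    (hf : ∀ a b, G.Adj a b → Commute (f a) (f b)) : RAAG G →* H :=
  PresentedGroup.toGroup (raag_rels_one hf)

lemma raagHom_gen {H : Type*} [Group H] (f : V → H)
    (hf : ∀ a b, G.Adj a b → Commute (f a) (f b)) (w : V) :
    raagHom f hf (gen G w) = f w :=
  PresentedGroup.toGroup.of _

lemma raagHom_mk {H : Type*} [Group H] (f : V → H)
    (hf : ∀ a b, G.Adj a b → Commute (f a) (f b)) (y : FreeGroup V) :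
    raagHom f hf (PresentedGroup.mk (raagRels G) y) = FreeGroup.lift f y := rfl

/-- Generalized exponent-sum homomorphism. -/
noncomputable def expHom (G : SimpleGraph V) (c : V → ℤ) : RAAG G →* Multiplicative ℤ :=
  raagHom (fun w => Multiplicative.ofAdd (c w)) (fun _ _ _ => Commute.all _ _)

lemma expHom_mk (G : SimpleGraph V) (c : V → ℤ) (L : List (V × Bool)) :
    expHom G c (PresentedGroup.mk (raagRels G) (FreeGroup.mk L)) =
      Multiplicative.ofAdd ((L.map fun p => if p.2 then c p.1 else -c p.1).sum) := by
  rw [expHom, raagHom_mk, FreeGroup.lift_mk]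
  induction L with
  | nil => rfl
  | cons p t ih =>
    obtain ⟨pa, pb⟩ := p
    rw [List.map_cons, List.prod_cons, ih, List.map_cons, List.sum_cons, ofAdd_add]
    cases pb <;> rfl

lemma expHom_conj (G : SimpleGraph V) (c : V → ℤ) (h g : RAAG G) :
    expHom G c (h * g * h⁻¹) = expHom G c g := by
  rw [map_mul, map_mul, map_inv, mul_comm (expHom G c h), mul_inv_cancel_right]

lemma expHom_commutator (G : SimpleGraph V) (c : V → ℤ) (g₁ g₂ : RAAG G) :
    expHom G c ⁅g₁, g₂⁆ = 1 := by
  rw [map_commutatorElement]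
  exact commutatorElement_eq_one_iff_commute.mpr (Commute.all _ _)

/-- The three transpositions in `S₃` used as a test pattern. -/
def pA : Equiv.Perm (Fin 3) := Equiv.swap 0 1
def pB : Equiv.Perm (Fin 3) := Equiv.swap 0 2
def pC : Equiv.Perm (Fin 3) := Equiv.swap 1 2

end Aux5

/-- If `u, v` lie in distinct components of `Γ - st(x)`, then
`[u,v]` is a nontrivial cyclically reduced element, any partial conjugation
`π^x_K` (with `u ∈ K`, `v ∉ K`) sends it to `[xux⁻¹, v]`, and this image is not
conjugate to `[u,v]`. -/
theorem commutator_not_conjugate [Fintype V] (G : SimpleGraph V) (x u v : V)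
    (hu : u ∈ (st G x)ᶜ) (hv : v ∈ (st G x)ᶜ)
    (hsep : ¬ gReach G ∅ ((st G x)ᶜ) u v)
    (K : Set V) (hK : UnionOfComps G ∅ ((st G x)ᶜ) K)
    (huK : u ∈ K) (hvK : v ∉ K) :
    ⁅gen G u, gen G v⁆ ≠ (1 : RAAG G) ∧
    CycRed G ⁅gen G u, gen G v⁆ ∧
    (∀ π : MulAut (RAAG G),
      (∀ w ∈ K, π (gen G w) = gen G x * gen G w * (gen G x)⁻¹) →
      (∀ w ∉ K, π (gen G w) = gen G w) →
      π ⁅gen G u, gen G v⁆ = ⁅gen G x * gen G u * (gen G x)⁻¹, gen G v⁆) ∧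
    ¬ IsConj (⁅gen G x * gen G u * (gen G x)⁻¹, gen G v⁆) ⁅gen G u, gen G v⁆ := by
  classical
  -- basic graph-theoretic facts
  have hu' := hu
  have hv' := hv
  simp only [st, lk, Set.mem_compl_iff, Set.mem_insert_iff, Set.mem_setOf_eq, not_or] at hu hv
  obtain ⟨hux, hAxu⟩ := hu
  obtain ⟨hvx, hAxv⟩ := hv
  have huv : u ≠ v := fun h => hsep (h ▸ Relation.ReflTransGen.refl)
  have hAuv : ¬ G.Adj u v := fun h =>
    hsep (Relation.ReflTransGen.single ⟨hu', hv', Or.inl h⟩)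
  -- the test homomorphism to S₃
  set ρ : V → Equiv.Perm (Fin 3) :=
    fun w => if w = x then pC else if w = u then pA else if w = v then pB else 1 with hρ
  have key : ∀ p q, G.Adj p q → ρ p = 1 ∨ ρ q = 1 := by
    intro p q hpq
    by_cases hp : p = x ∨ p = u ∨ p = v
    · right
      have hqx : q ≠ x := by
        rintro rfl
        rcases hp with rfl | rfl | rfl
        exacts [G.loopless.irrefl _ hpq, hAxu hpq.symm, hAxv hpq.symm]
      have hqu : q ≠ u := by
        rintro rfl
        rcases hp with rfl | rfl | rfl
        exacts [hAxu hpq, G.loopless.irrefl _ hpq, hAuv hpq.symm]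
      have hqv : q ≠ v := by
        rintro rfl
        rcases hp with rfl | rfl | rfl
        exacts [hAxv hpq, hAuv hpq, G.loopless.irrefl _ hpq]
      simp [hρ, hqx, hqu, hqv]
    · push_neg at hp
      left
      simp [hρ, hp.1, hp.2.1, hp.2.2]
  have hcomm : ∀ p q, G.Adj p q → Commute (ρ p) (ρ q) := by
    intro p q hpq
    rcases key p q hpq with h | h <;> rw [h]
    exacts [Commute.one_left _, Commute.one_right _]
  set f3 : RAAG G →* Equiv.Perm (Fin 3) := raagHom ρ hcomm with hf3
  have hfu : f3 (gen G u) = pA := by rw [hf3, raagHom_gen, hρ]; simp [hux]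
  have hfv : f3 (gen G v) = pB := by rw [hf3, raagHom_gen, hρ]; simp [hvx, huv.symm]
  have hfx : f3 (gen G x) = pC := by rw [hf3, raagHom_gen, hρ]; simp
  -- nontriviality
  have hne : ⁅gen G u, gen G v⁆ ≠ (1 : RAAG G) := by
    intro hone
    have : (⁅pA, pB⁆ : Equiv.Perm (Fin 3)) = 1 := by
      rw [← hfu, ← hfv, ← map_commutatorElement, hone, map_one]
    exact absurd this (by decide)
  refine ⟨hne, ?_, ?_, ?_⟩
  · -- cyclically reduced
    intro h
    have hg1ne : h * ⁅gen G u, gen G v⁆ * h⁻¹ ≠ 1 := fun he => hne (conj_eq_one_iff.mp he)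
    have hE : ∀ c : V → ℤ, expHom G c (h * ⁅gen G u, gen G v⁆ * h⁻¹) = 1 := by
      intro c
      rw [expHom_conj, expHom_commutator]
    -- upper bound : wordLength of the commutator is at most 4
    have hub : wordLength G ⁅gen G u, gen G v⁆ ≤ 4 := by
      apply Nat.sInf_le
      refine ⟨[(u, true), (v, true), (u, false), (v, false)], ?_, rfl⟩
      have e1 : FreeGroup.mk [(u, true), (v, true), (u, false), (v, false)]
          = FreeGroup.of u * FreeGroup.of v * (FreeGroup.of u)⁻¹ * (FreeGroup.of v)⁻¹ := by
        rw [show (FreeGroup.of u : FreeGroup V) = FreeGroup.mk [(u, true)] from rfl,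
          show (FreeGroup.of v : FreeGroup V) = FreeGroup.mk [(v, true)] from rfl,
          FreeGroup.inv_mk, FreeGroup.inv_mk]
        simp [FreeGroup.invRev, FreeGroup.mul_mk]
      rw [e1, map_mul, map_mul, map_inv, map_inv, commutatorElement_def]
      rfl
    -- lower bound : any word for the conjugate has length at least 4
    obtain ⟨w0, hw0⟩ := PresentedGroup.mk_surjective (raagRels G)
      (h * ⁅gen G u, gen G v⁆ * h⁻¹)
    have hnonempty : {n | ∃ l : List (V × Bool),
        PresentedGroup.mk (raagRels G) (FreeGroup.mk l) = h * ⁅gen G u, gen G v⁆ * h⁻¹ ∧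
        l.length = n}.Nonempty :=
      ⟨w0.toWord.length, w0.toWord, by rw [FreeGroup.mk_toWord, hw0], rfl⟩
    have hmem : wordLength G (h * ⁅gen G u, gen G v⁆ * h⁻¹) ∈ {n | ∃ l : List (V × Bool),
        PresentedGroup.mk (raagRels G) (FreeGroup.mk l) = h * ⁅gen G u, gen G v⁆ * h⁻¹ ∧
        l.length = n} := Nat.sInf_mem hnonempty
    obtain ⟨l, hl, hlen⟩ := hmem
    suffices h4 : 4 ≤ l.length by
      calc wordLength G ⁅gen G u, gen G v⁆ ≤ 4 := hub
        _ ≤ l.length := h4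
        _ = _ := hlen
    rcases l with _ | ⟨⟨a1, b1⟩, _ | ⟨⟨a2, b2⟩, _ | ⟨⟨a3, b3⟩, _ | ⟨p4, rest⟩⟩⟩⟩
    · exfalso
      apply hg1ne
      rw [← hl, ← FreeGroup.one_eq_mk, map_one]
    · exfalso
      have hB := hE (fun _ => (1 : ℤ))
      rw [← hl, expHom_mk] at hB
      rw [ofAdd_eq_one] at hB
      cases b1 <;> simp_all
    · by_cases ha : a1 = a2
      · subst ha
        -- same letter
        cases b1 <;> cases b2
        · exfalso
          have hB := hE (fun _ => (1 : ℤ))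
          rw [← hl, expHom_mk] at hB
          rw [ofAdd_eq_one] at hB
          simp at hB
        · -- inverse pair : the word is trivial
          exfalso
          apply hg1ne
          rw [← hl]
          have : FreeGroup.mk [(a1, false), (a1, true)] = (1 : FreeGroup V) := by
            rw [show FreeGroup.mk [(a1, false), (a1, true)]
                = FreeGroup.mk [(a1, false)] * FreeGroup.mk [(a1, true)] from
              by rw [FreeGroup.mul_mk]; rfl,
              show (FreeGroup.mk [(a1, false)] : FreeGroup V) = (FreeGroup.of a1)⁻¹ by
                rw [show (FreeGroup.of a1 : FreeGroup V) = FreeGroup.mk [(a1, true)] from rfl,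
                  FreeGroup.inv_mk]; simp [FreeGroup.invRev]]
            rw [show (FreeGroup.mk [(a1, true)] : FreeGroup V) = FreeGroup.of a1 from rfl,
              inv_mul_cancel]
          rw [this, map_one]
        · exfalso
          apply hg1ne
          rw [← hl]
          have : FreeGroup.mk [(a1, true), (a1, false)] = (1 : FreeGroup V) := by
            rw [show FreeGroup.mk [(a1, true), (a1, false)]
                = FreeGroup.mk [(a1, true)] * FreeGroup.mk [(a1, false)] from
              by rw [FreeGroup.mul_mk]; rfl,
              show (FreeGroup.mk [(a1, false)] : FreeGroup V) = (FreeGroup.of a1)⁻¹ by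
                rw [show (FreeGroup.of a1 : FreeGroup V) = FreeGroup.mk [(a1, true)] from rfl,
                  FreeGroup.inv_mk]; simp [FreeGroup.invRev]]
            rw [show (FreeGroup.mk [(a1, true)] : FreeGroup V) = FreeGroup.of a1 from rfl,
              mul_inv_cancel]
          rw [this, map_one]
        · exfalso
          have hB := hE (fun _ => (1 : ℤ))
          rw [← hl, expHom_mk] at hB
          rw [ofAdd_eq_one] at hB
          simp at hB
      · -- distinct letters : use the exponent sum at a1
        exfalso
        have hA := hE (fun t => if t = a1 then (1 : ℤ) else 0)
        rw [← hl, expHom_mk] at hA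
        rw [ofAdd_eq_one] at hA
        have ha2 : a2 ≠ a1 := fun hh => ha hh.symm
        cases b1 <;> cases b2 <;> simp [ha2] at hA
    · exfalso
      have hB := hE (fun _ => (1 : ℤ))
      rw [← hl, expHom_mk] at hB
      rw [ofAdd_eq_one] at hB
      cases b1 <;> cases b2 <;> cases b3 <;> simp at hB
    · simp only [List.length_cons]
      omega
  · -- image under the partial conjugation
    intro π hπK hπK'
    rw [map_commutatorElement, hπK u huK, hπK' v hvK]
  · -- non-conjugacy
    intro hc
    have h2 := f3.map_isConj hc
    rw [map_commutatorElement, map_commutatorElement, map_mul, map_mul, map_inv,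
      hfu, hfv, hfx] at h2
    rw [show (⁅pC * pA * pC⁻¹, pB⁆ : Equiv.Perm (Fin 3)) = 1 by decide] at h2
    exact absurd (isConj_one_right.mp h2) (by decide)

end RAAGPaper
end

section
/- Let Γ be a finite simple graph and define the standard order on vertices by u ≤ v iff lk(u) ⊆ st(v). If v and w are distinct vertices with v ≤ w and w ≤ v (i.e., v ∼ w), then the product ι_v (ρ_v^w)^{-1} ι_v ι_w ρ_w^v (ρ_v^w)^{-1} of inversions and transvections is the automorphism of A_Γ induced by the graph symmetry exchanging v and w and fixing all other vertices. -/
/-! Basic definitions: right-angled Artin groups, special subgroups,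
relative automorphism notions, and graph-theoretic notions from
Day–Wade, "Relative automorphism groups of right-angled Artin groups". -/

namespace RAAGPaper

open scoped commutatorElement

variable {V : Type}

/-- Automorphisms of a RAAG agreeing on all generators are equal. -/
theorem mulAut_ext {G : SimpleGraph V} (φ ψ : MulAut (RAAG G))
    (h : ∀ u, φ (gen G u) = ψ (gen G u)) : φ = ψ := by
  ext x
  refine PresentedGroup.generated_by (raagRels G)
    { carrier := {x | φ x = ψ x}
      one_mem' := by simp
      mul_mem' := fun {a b} ha hb => by
        simp only [Set.mem_setOf_eq, map_mul] at *
        rw [ha, hb]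
      inv_mem' := fun {a} ha => by
        simp only [Set.mem_setOf_eq, map_inv] at *
        rw [ha] } (fun j => h j) x

/-- If `v ∼ w` in the standard order, then the product
`ι_v (ρ_v^w)⁻¹ ι_v ι_w ρ_w^v (ρ_v^w)⁻¹` is the automorphism induced by the graph
symmetry exchanging `v` and `w`. -/
theorem swap_as_product [Fintype V] (G : SimpleGraph V) (v w : V) (hvw : v ≠ w)
    (h1 : stdLE G v w) (h2 : stdLE G w v)
    (ιv : MulAut (RAAG G)) (hιv1 : ιv (gen G v) = (gen G v)⁻¹)
    (hιv2 : ∀ u, u ≠ v → ιv (gen G u) = gen G u)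
    (ιw : MulAut (RAAG G)) (hιw1 : ιw (gen G w) = (gen G w)⁻¹)
    (hιw2 : ∀ u, u ≠ w → ιw (gen G u) = gen G u)
    (ρvw : MulAut (RAAG G)) (hρvw1 : ρvw (gen G v) = gen G v * gen G w)
    (hρvw2 : ∀ u, u ≠ v → ρvw (gen G u) = gen G u)
    (ρwv : MulAut (RAAG G)) (hρwv1 : ρwv (gen G w) = gen G w * gen G v)
    (hρwv2 : ∀ u, u ≠ w → ρwv (gen G u) = gen G u)
    (σ : MulAut (RAAG G)) (hσ1 : σ (gen G v) = gen G w) (hσ2 : σ (gen G w) = gen G v)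
    (hσ3 : ∀ u, u ≠ v → u ≠ w → σ (gen G u) = gen G u) :
    ιv * ρvw⁻¹ * ιv * ιw * ρwv * ρvw⁻¹ = σ := by
  have hne : w ≠ v := hvw.symm
  have key : ∀ x, ρvw (ρvw⁻¹ x) = x := fun x => ρvw.apply_symm_apply x
  have hinvρ1 : ρvw⁻¹ (gen G v) = gen G v * (gen G w)⁻¹ := by
    apply ρvw.injective
    rw [key, map_mul, map_inv, hρvw1, hρvw2 w hne, mul_inv_cancel_right]
  have hinvρ2 : ∀ u, u ≠ v → ρvw⁻¹ (gen G u) = gen G u := fun u hu => by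
    apply ρvw.injective
    rw [key, hρvw2 u hu]
  apply mulAut_ext
  intro u
  by_cases huv : u = v
  · rw [huv]
    simp [MulAut.mul_apply, hinvρ1, hinvρ2 w hne, hρwv1, hρwv2 v hvw,
      hιw1, hιw2 v hvw, hιv1, hιv2 w hne, hσ1]
  · by_cases huw : u = w
    · rw [huw]
      have e1 : ρvw.symm (gen G v) = gen G v * (gen G w)⁻¹ := hinvρ1
      have e2 : ρvw.symm (gen G w) = gen G w := hinvρ2 w hne
      simp [MulAut.mul_apply, e1, e2, hρwv1, hρwv2 v hvw,
        hιw1, hιw2 v hvw, hιv1, hιv2 w hne, hσ2]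
    · simp [MulAut.mul_apply, hinvρ2 u huv, hρwv2 u huw, hιw2 u huw,
        hιv2 u huv, hσ3 u huv huw]

end RAAGPaper
end

section
/- Let Γ be a finite simple graph and 𝒢 a set of proper special subgroups. Suppose Δ and Λ are full subgraphs each upwards closed under ≤_𝒢 and not 𝒢-star-separated by any outside vertex, and suppose there is a vertex v ∈ Δ ∩ Λ with st(v) ⊆ Δ ∪ Λ. Then Δ ∪ Λ is also upwards closed under ≤_𝒢 and not 𝒢-star-separated by any outside vertex. -/
/-! Basic definitions: right-angled Artin groups, special subgroups,
relative automorphism notions, and graph-theoretic notions from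
Day–Wade, "Relative automorphism groups of right-angled Artin groups". -/

namespace RAAGPaper

variable {V : Type}

open scoped commutatorElement

/-- If `Δ` and `Λ` satisfy the invariance conditions and share a
vertex `v` with `st(v) ⊆ Δ ∪ Λ`, then `Δ ∪ Λ` satisfies the invariance
conditions. -/
theorem invariance_conditions_union [Fintype V] (G : SimpleGraph V)
    (calG : Set (Set V)) (hprop : Proper calG) (Δ Λ : Set V)
    (hΔ : UpClosed G calG Δ ∧ NotStarSep G calG Δ)
    (hΛ : UpClosed G calG Λ ∧ NotStarSep G calG Λ)
    (hv : ∃ v ∈ Δ ∩ Λ, st G v ⊆ Δ ∪ Λ) :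
    UpClosed G calG (Δ ∪ Λ) ∧ NotStarSep G calG (Δ ∪ Λ) := by
  obtain ⟨v, ⟨hvΔ, hvΛ⟩, hst⟩ := hv
  constructor
  · intro a ha w hw
    cases ha with
    | inl h => exact Or.inl (hΔ.1 a h w hw)
    | inr h => exact Or.inr (hΛ.1 a h w hw)
  · intro x hx u w hu hw hust hwst
    have hxΔ : x ∉ Δ := fun h => hx (Or.inl h)
    have hxΛ : x ∉ Λ := fun h => hx (Or.inr h)
    have hvst : v ∈ (st G x)ᶜ := by
      intro hmem
      cases hmem with
      | inl h => exact hxΔ (h ▸ hvΔ)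
      | inr h => exact hx (hst (Or.inr (G.adj_symm h)))
    have key1 : gReach G (calGx calG x) ((st G x)ᶜ) u v := by
      cases hu with
      | inl h => exact hΔ.2 x hxΔ u v h hvΔ hust hvst
      | inr h => exact hΛ.2 x hxΛ u v h hvΛ hust hvst
    have key2 : gReach G (calGx calG x) ((st G x)ᶜ) v w := by
      cases hw with
      | inl h => exact hΔ.2 x hxΔ v w hvΔ h hvst hwst
      | inr h => exact hΛ.2 x hxΛ v w hvΛ h hvst hwst
    exact key1.trans key2

end RAAGPaper
end

section
/- Let Γ be a finite simple graph, 𝒢 a set of proper special subgroups, A_Δ ∈ 𝒢, and Θ a 𝒢-connected subgraph of Γ − Δ. Let Λ = N_𝒢(Θ) ∩ Δ be the set of vertices of Δ that are 𝒢-adjacent to some vertex of Θ. Then Λ is upwards closed under ≤_𝒢 and is not 𝒢-star-separated by any vertex outside Λ. -/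
/-! Basic definitions: right-angled Artin groups, special subgroups,
relative automorphism notions, and graph-theoretic notions from
Day–Wade, "Relative automorphism groups of right-angled Artin groups". -/

namespace RAAGPaper

variable {V : Type}

open scoped commutatorElement

/-- For `A_Δ ∈ 𝒢` and a `𝒢`-connected subgraph `Θ` of `Γ - Δ`,
the set `Λ = N_𝒢(Θ) ∩ Δ` of vertices of `Δ` that are `𝒢`-adjacent to `Θ`
satisfies the invariance conditions. -/
theorem neighbourhood_in_peripheral_invariant [Fintype V] (G : SimpleGraph V)
    (calG : Set (Set V)) (hprop : Proper calG) (Δ : Set V) (hΔ : Δ ∈ calG)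
    (Θ : Set V) (hΘΔ : Θ ⊆ Δᶜ)
    (hconn : ∀ u ∈ Θ, ∀ w ∈ Θ, gReach G calG Θ u w) :
    UpClosed G calG {d ∈ Δ | ∃ t ∈ Θ, gAdj G calG d t} ∧
      NotStarSep G calG {d ∈ Δ | ∃ t ∈ Θ, gAdj G calG d t} := by
  constructor
  · intro v hv w hle
    obtain ⟨hvΔ, t, htΘ, hadj⟩ := hv
    refine ⟨hle.2 Δ hΔ hvΔ, t, htΘ, ?_⟩
    rcases hadj with h | ⟨Δ', hΔ', hvΔ', htΔ'⟩
    · have ht' : t ∈ st G w := hle.1 h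
      rcases ht' with rfl | h'
      · exact absurd (hΘΔ htΘ) (fun hc => hc (hle.2 Δ hΔ hvΔ))
      · exact Or.inl h'
    · exact Or.inr ⟨Δ', hΔ', hle.2 Δ' hΔ' hvΔ', htΔ'⟩
  · intro x hx u w hu hw hust hwst
    by_cases hxΔ : x ∈ Δ
    · have hΘadj : ∀ t ∈ Θ, ¬ gAdj G calG x t := fun t ht hadj => hx ⟨hxΔ, t, ht, hadj⟩
      have hΘst : Θ ⊆ (st G x)ᶜ := by
        intro t ht hst
        rcases hst with rfl | h
        · exact hΘΔ ht hxΔ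
        · exact hΘadj t ht (Or.inl h)
      have hsymm : Symmetric (fun a b => a ∈ (st G x)ᶜ ∧ b ∈ (st G x)ᶜ ∧
          gAdj G (calGx calG x) a b) := by
        rintro a b ⟨h1, h2, h3⟩
        refine ⟨h2, h1, ?_⟩
        rcases h3 with h | ⟨Δ', hΔ', ha, hb⟩
        · exact Or.inl h.symm
        · exact Or.inr ⟨Δ', hΔ', hb, ha⟩
      have lift : ∀ a b, gReach G calG Θ a b →
          gReach G (calGx calG x) ((st G x)ᶜ) a b := by
        intro a b h
        induction h with
        | refl => exact .refl
        | tail h1 h2 ih =>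
          obtain ⟨hc1, hc2, hadj⟩ := h2
          refine ih.tail ⟨hΘst hc1, hΘst hc2, ?_⟩
          rcases hadj with h | ⟨Δ', hΔ', h1', h2'⟩
          · exact Or.inl h
          · exact Or.inr ⟨Δ', ⟨hΔ', fun hxΔ' =>
              hΘadj _ hc2 (Or.inr ⟨Δ', hΔ', hxΔ', h2'⟩)⟩, h1', h2'⟩
      have step : ∀ v, v ∈ {d ∈ Δ | ∃ t ∈ Θ, gAdj G calG d t} → v ∈ (st G x)ᶜ →
          ∃ t ∈ Θ, gReach G (calGx calG x) ((st G x)ᶜ) v t := by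
        intro v hv hvst
        obtain ⟨hvΔ, t, ht, hadj⟩ := hv
        refine ⟨t, ht, Relation.ReflTransGen.single ⟨hvst, hΘst ht, ?_⟩⟩
        rcases hadj with h | ⟨Δ', hΔ', h1', h2'⟩
        · exact Or.inl h
        · exact Or.inr ⟨Δ', ⟨hΔ', fun hxΔ' =>
            hΘadj _ ht (Or.inr ⟨Δ', hΔ', hxΔ', h2'⟩)⟩, h1', h2'⟩
      obtain ⟨tu, htu, hru⟩ := step u hu hust
      obtain ⟨tw, htw, hrw⟩ := step w hw hwst
      exact (hru.trans (lift _ _ (hconn tu htu tw htw))).trans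
        ((@Relation.ReflTransGen.stdSymm _ _ ⟨fun a b h => hsymm h⟩).symm _ _ hrw)
    · exact Relation.ReflTransGen.single
        ⟨hust, hwst, Or.inr ⟨Δ, ⟨hΔ, hxΔ⟩, hu.1, hw.1⟩⟩

end RAAGPaper
end

section
/- Let Γ be a finite simple graph, 𝒢 a set of proper special subgroups, A_Δ ∈ 𝒢, and x a vertex with x ∉ Δ. Then the subgraph lk(x) ∩ Δ is upwards closed under ≤_𝒢 and is not 𝒢-star-separated by any vertex outside it; hence A_{lk(x)∩Δ} is invariant under Out⁰(A_Γ; 𝒢). -/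
/-! Basic definitions: right-angled Artin groups, special subgroups,
relative automorphism notions, and graph-theoretic notions from
Day–Wade, "Relative automorphism groups of right-angled Artin groups". -/

namespace RAAGPaper

variable {V : Type}

open scoped commutatorElement

/-- For `A_Δ ∈ 𝒢` and a vertex `x ∉ Δ`, the subgraph
`lk(x) ∩ Δ` satisfies the invariance conditions (so `A_{lk(x)∩Δ}` is invariant
under `Out⁰(A_Γ;𝒢)`). -/
theorem link_inter_peripheral_invariant [Fintype V] (G : SimpleGraph V)
    (calG : Set (Set V)) (hprop : Proper calG) (Δ : Set V) (hΔ : Δ ∈ calG)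
    (x : V) (hx : x ∉ Δ) :
    UpClosed G calG (lk G x ∩ Δ) ∧ NotStarSep G calG (lk G x ∩ Δ) := by
  constructor
  · -- upwards closed
    rintro v ⟨hvlk, hvΔ⟩ w ⟨hstd, hmem⟩
    have hwΔ : w ∈ Δ := hmem Δ hΔ hvΔ
    refine ⟨?_, hwΔ⟩
    have hxlkv : x ∈ lk G v := G.adj_symm hvlk
    have : x ∈ st G w := hstd hxlkv
    rcases this with h | h
    · exact absurd (h ▸ hwΔ) hx
    · exact G.adj_symm h
  · -- not star-separated
    intro y hy u w hu hw hus hws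
    by_cases hyΔ : y ∈ Δ
    · -- then y ∉ lk x, so x ∉ st y; path u – x – w
      have hylk : y ∉ lk G x := fun h => hy ⟨h, hyΔ⟩
      have hxst : x ∈ (st G y)ᶜ := by
        intro h
        rcases h with h | h
        · exact hx (h ▸ hyΔ)
        · exact hylk (G.adj_symm h)
      refine Relation.ReflTransGen.head ⟨hus, hxst, Or.inl (G.adj_symm hu.1)⟩ ?_
      exact Relation.ReflTransGen.single ⟨hxst, hws, Or.inl hw.1⟩
    · -- Δ ∈ 𝒢^y and u, w ∈ Δ
      exact Relation.ReflTransGen.single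
        ⟨hus, hws, Or.inr ⟨Δ, ⟨hΔ, hyΔ⟩, hu.2, hw.2⟩⟩

end RAAGPaper
end

section
/- Let Γ be a finite simple graph. For a vertex v let A_{≥v} be the special subgroup generated by all vertices w with v ≤ w (in the standard order). Then every inversion, transvection, and extended partial conjugation of A_Γ maps A_{≥v} to a conjugate of A_{≥v}. In particular, for an extended partial conjugation π^x_K with x ∉ A_{≥v}, the automorphism π^x_K either fixes A_{≥v} pointwise or conjugates all of A_{≥v} by x. -/
/-! Basic definitions: right-angled Artin groups, special subgroups,
relative automorphism notions, and graph-theoretic notions from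
Day–Wade, "Relative automorphism groups of right-angled Artin groups". -/

namespace RAAGPaper

variable {V : Type}

open scoped commutatorElement

section AuxLemmas

variable {A : Type*} [Group A]

lemma aux_pointwise_of_gens (φ : MulAut A) (S : Set A) (g : A)
    (h : ∀ s ∈ S, φ s = g * s * g⁻¹) :
    ∀ x ∈ Subgroup.closure S, φ x = g * x * g⁻¹ := by
  intro x hx
  induction hx using Subgroup.closure_induction with
  | mem s hs => exact h s hs
  | one => simp
  | mul a b _ _ ha hb => rw [map_mul, ha, hb]; group
  | inv a _ ha => rw [map_inv, ha]; group

lemma aux_map_closure_self (φ : MulAut A) (S : Set A)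
    (h1 : ∀ s ∈ S, φ s ∈ Subgroup.closure S)
    (h2 : ∀ s ∈ S, ∃ a ∈ Subgroup.closure S, φ a = s) :
    Subgroup.map φ.toMonoidHom (Subgroup.closure S) = Subgroup.closure S := by
  apply le_antisymm
  · rw [MonoidHom.map_closure]
    refine (Subgroup.closure_le _).mpr ?_
    rintro y ⟨s, hs, rfl⟩
    exact h1 s hs
  · refine (Subgroup.closure_le _).mpr fun s hs => ?_
    obtain ⟨a, ha, hfa⟩ := h2 s hs
    exact ⟨a, ha, hfa⟩

lemma aux_conj_one_map (H : Subgroup A) :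
    Subgroup.map (MulAut.conj (1 : A)).toMonoidHom H = H := by
  ext y
  simp [Subgroup.mem_map, MulAut.conj_apply]

lemma aux_preserves_of_pointwise (φ : MulAut A) (H : Subgroup A) (g : A)
    (h : ∀ x ∈ H, φ x = g * x * g⁻¹) : Preserves φ H := by
  refine ⟨g, ?_⟩
  ext y
  simp only [Subgroup.mem_map, MulEquiv.coe_toMonoidHom, MulAut.conj_apply]
  constructor
  · rintro ⟨a, ha, rfl⟩; exact ⟨a, ha, (h a ha).symm⟩
  · rintro ⟨a, ha, rfl⟩; exact ⟨a, ha, h a ha⟩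

end AuxLemmas

lemma aux_stdLE_trans (G : SimpleGraph V) {a b c : V} (h1 : stdLE G a b) (h2 : stdLE G b c) :
    stdLE G a c := by
  intro y hy
  rcases Set.mem_insert_iff.mp (h1 hy) with rfl | hadj
  · rcases Set.mem_insert_iff.mp (h2 (G.adj_symm hy : a ∈ lk G y)) with rfl | hac
    · exact Set.mem_insert_iff.mpr (Or.inr hy)
    · rcases Set.mem_insert_iff.mp (h1 (G.adj_symm hac : c ∈ lk G a)) with rfl | hbc
      · exact Set.mem_insert _ _
      · exact Set.mem_insert_iff.mpr (Or.inr (G.adj_symm hbc))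
  · exact h2 hadj

lemma aux_key_step (G : SimpleGraph V) {v x : V} (hvx : ¬ stdLE G v x) :
    ∃ u, u ∉ st G x ∧ ∀ w, stdLE G v w → u = w ∨ G.Adj u w := by
  obtain ⟨u, hu, hux⟩ := Set.not_subset.mp hvx
  refine ⟨u, hux, fun w hw => ?_⟩
  rcases Set.mem_insert_iff.mp (hw hu) with rfl | h
  · exact Or.inl rfl
  · exact Or.inr (G.adj_symm h)

lemma aux_gen_mul_comm (G : SimpleGraph V) {x w : V} (h : w ∈ st G x) :
    gen G x * gen G w = gen G w * gen G x := by
  rcases Set.mem_insert_iff.mp h with rfl | h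
  · rfl
  · have hr : ⁅FreeGroup.of x, FreeGroup.of w⁆ ∈ raagRels G := ⟨x, w, h, rfl⟩
    have h1 : ⁅gen G x, gen G w⁆ = (1 : RAAG G) := by
      have : PresentedGroup.mk (raagRels G) ⁅FreeGroup.of x, FreeGroup.of w⁆ = 1 :=
        (QuotientGroup.eq_one_iff _).mpr (Subgroup.subset_normalClosure hr)
      rw [map_commutatorElement] at this
      exact this
    exact commutatorElement_eq_one_iff_mul_comm.mp h1

lemma aux_sp_eq (G : SimpleGraph V) (D : Set V) :
    sp G D = Subgroup.closure (gen G '' D) := rfl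


/-- Every inversion, transvection, and extended partial
conjugation sends `A_{≥v}` to a conjugate of itself; moreover an extended partial
conjugation `π^x_K` with `x ∉ A_{≥v}` either fixes `A_{≥v}` pointwise or
conjugates all of it by `x`. -/
theorem Ageq_invariant [Fintype V] (G : SimpleGraph V) (v : V) :
    (∀ (u : V) (ι : MulAut (RAAG G)), ι (gen G u) = (gen G u)⁻¹ →
        (∀ w, w ≠ u → ι (gen G w) = gen G w) →
        Preserves ι (sp G {w | stdLE G v w})) ∧
    (∀ (u z : V), u ≠ z → stdLE G u z → ∀ ρ : MulAut (RAAG G),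
        ρ (gen G u) = gen G u * gen G z →
        (∀ y, y ≠ u → ρ (gen G y) = gen G y) →
        Preserves ρ (sp G {w | stdLE G v w})) ∧
    (∀ (x : V) (K : Set V), UnionOfComps G ∅ ((st G x)ᶜ) K →
        ∀ π : MulAut (RAAG G),
          (∀ w ∈ K, π (gen G w) = gen G x * gen G w * (gen G x)⁻¹) →
          (∀ w ∉ K, π (gen G w) = gen G w) →
          Preserves π (sp G {w | stdLE G v w}) ∧
            (gen G x ∉ sp G {w | stdLE G v w} →
              ((∀ h ∈ sp G {w | stdLE G v w}, π h = h) ∨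
                (∀ h ∈ sp G {w | stdLE G v w},
                  π h = gen G x * h * (gen G x)⁻¹)))):= by
  constructor
  · -- inversions
    intro u ι h1 h2
    refine ⟨1, ?_⟩
    rw [aux_conj_one_map, aux_sp_eq]
    apply aux_map_closure_self
    · rintro s ⟨w, hw, rfl⟩
      by_cases hwu : w = u
      · subst hwu; rw [h1]
        exact inv_mem (Subgroup.subset_closure ⟨w, hw, rfl⟩)
      · rw [h2 w hwu]; exact Subgroup.subset_closure ⟨w, hw, rfl⟩
    · rintro s ⟨w, hw, rfl⟩
      by_cases hwu : w = u
      · subst hwu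
        exact ⟨(gen G w)⁻¹, inv_mem (Subgroup.subset_closure ⟨w, hw, rfl⟩),
          by rw [map_inv, h1, inv_inv]⟩
      · exact ⟨gen G w, Subgroup.subset_closure ⟨w, hw, rfl⟩, h2 w hwu⟩
  constructor
  · -- transvections
    intro u z huz hle ρ h1 h2
    refine ⟨1, ?_⟩
    rw [aux_conj_one_map, aux_sp_eq]
    apply aux_map_closure_self
    · rintro s ⟨w, hw, rfl⟩
      by_cases hwu : w = u
      · subst hwu
        rw [h1]
        exact mul_mem (Subgroup.subset_closure ⟨w, hw, rfl⟩)
          (Subgroup.subset_closure ⟨z, aux_stdLE_trans G hw hle, rfl⟩)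
      · rw [h2 w hwu]; exact Subgroup.subset_closure ⟨w, hw, rfl⟩
    · rintro s ⟨w, hw, rfl⟩
      by_cases hwu : w = u
      · subst hwu
        refine ⟨gen G w * (gen G z)⁻¹,
          mul_mem (Subgroup.subset_closure ⟨w, hw, rfl⟩)
            (inv_mem (Subgroup.subset_closure ⟨z, aux_stdLE_trans G hw hle, rfl⟩)), ?_⟩
        rw [map_mul, map_inv, h1, h2 z (Ne.symm huz)]
        group
      · exact ⟨gen G w, Subgroup.subset_closure ⟨w, hw, rfl⟩, h2 w hwu⟩
  · -- extended partial conjugations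
    intro x K hK π hπK hπnK
    have hcomm : ∀ w ∈ st G x, π (gen G w) = gen G x * gen G w * (gen G x)⁻¹ := by
      intro w hw
      have hwK : w ∉ K := fun h => (hK.1 h) hw
      rw [hπnK w hwK, aux_gen_mul_comm G hw]
      group
    have dich : ¬ stdLE G v x →
        (∀ h ∈ sp G {w | stdLE G v w}, π h = h) ∨
          (∀ h ∈ sp G {w | stdLE G v w}, π h = gen G x * h * (gen G x)⁻¹) := by
      intro hvx
      by_cases hmeet : ∃ w0, stdLE G v w0 ∧ w0 ∈ K
      · right
        obtain ⟨w0, hw0, hw0K⟩ := hmeet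
        obtain ⟨u, hux, hadj⟩ := aux_key_step G hvx
        have hw0x : w0 ∉ st G x := hK.1 hw0K
        have hgen : ∀ w, stdLE G v w → π (gen G w) = gen G x * gen G w * (gen G x)⁻¹ := by
          intro w hw
          by_cases hwst : w ∈ st G x
          · exact hcomm w hwst
          · have hwK : w ∈ K := by
              apply hK.2 w0 hw0K
              have s1 : gReach G ∅ ((st G x)ᶜ) w0 u := by
                rcases hadj w0 hw0 with rfl | h
                · exact Relation.ReflTransGen.refl
                · exact Relation.ReflTransGen.single ⟨hw0x, hux, Or.inl (G.adj_symm h)⟩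
              have s2 : gReach G ∅ ((st G x)ᶜ) u w := by
                rcases hadj w hw with rfl | h
                · exact Relation.ReflTransGen.refl
                · exact Relation.ReflTransGen.single ⟨hux, hwst, Or.inl h⟩
              exact s1.trans s2
            exact hπK w hwK
        intro h hh
        exact aux_pointwise_of_gens π (gen G '' {w | stdLE G v w}) (gen G x)
          (by rintro s ⟨w, hw, rfl⟩; exact hgen w hw) h hh
      · left
        intro h hh
        have := aux_pointwise_of_gens π (gen G '' {w | stdLE G v w}) 1
          (by
            rintro s ⟨w, hw, rfl⟩
            rw [hπnK w (fun hk => hmeet ⟨w, hw, hk⟩)]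
            group) h hh
        simpa using this
    refine ⟨?_, fun hx => dich fun hle => hx (Subgroup.subset_closure ⟨x, hle, rfl⟩)⟩
    by_cases hvx : stdLE G v x
    · refine ⟨1, ?_⟩
      rw [aux_conj_one_map, aux_sp_eq]
      have hxH : gen G x ∈ Subgroup.closure (gen G '' {w | stdLE G v w}) :=
        Subgroup.subset_closure ⟨x, hvx, rfl⟩
      have hπx : π (gen G x) = gen G x :=
        hπnK x (fun h => (hK.1 h) (Set.mem_insert _ _))
      apply aux_map_closure_self
      · rintro s ⟨w, hw, rfl⟩
        by_cases hwK : w ∈ K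
        · rw [hπK w hwK]
          exact mul_mem (mul_mem hxH (Subgroup.subset_closure ⟨w, hw, rfl⟩)) (inv_mem hxH)
        · rw [hπnK w hwK]; exact Subgroup.subset_closure ⟨w, hw, rfl⟩
      · rintro s ⟨w, hw, rfl⟩
        by_cases hwK : w ∈ K
        · refine ⟨(gen G x)⁻¹ * gen G w * gen G x,
            mul_mem (mul_mem (inv_mem hxH) (Subgroup.subset_closure ⟨w, hw, rfl⟩)) hxH, ?_⟩
          rw [map_mul, map_mul, map_inv, hπx, hπK w hwK]
          group
        · exact ⟨gen G w, Subgroup.subset_closure ⟨w, hw, rfl⟩, hπnK w hwK⟩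
    · rcases dich hvx with h | h
      · exact aux_preserves_of_pointwise π _ 1 (by intro a ha; rw [h a ha]; group)
      · exact aux_preserves_of_pointwise π _ (gen G x) h


end RAAGPaper
end

section
/- Let Γ be a finite simple graph, 𝒢 a saturated set of proper special subgroups (𝒢 contains every proper special subgroup invariant under Out⁰(A_Γ;𝒢)), and A_Δ ∈ 𝒢. Define 𝒢_Δ = {A_{Δ∩Λ} : A_Λ ∈ 𝒢, Δ∩Λ ≠ Δ}. Then for u ∈ Δ and any vertex v of Γ: u ≤_𝒢 v if and only if v ∈ Δ and u ≤_{𝒢_Δ} v, where ≤_{𝒢_Δ} is computed inside Δ (i.e., lk_Δ(u) ⊆ st_Δ(v) and every member of 𝒢_Δ containing u contains v). -/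
/-! Basic definitions: right-angled Artin groups, special subgroups,
relative automorphism notions, and graph-theoretic notions from
Day–Wade, "Relative automorphism groups of right-angled Artin groups". -/

namespace RAAGPaper

variable {V : Type}

open scoped commutatorElement

/-- Key lemma: for saturated `𝒢`, `Δ ∈ 𝒢` and `x ∉ Δ`, `lk(x) ∩ Δ ∈ 𝒢`. -/
theorem lk_inter_mem [Fintype V] (G : SimpleGraph V) (calG : Set (Set V))
    (hsat : Saturated G calG) (Δ : Set V) (hΔ : Δ ∈ calG) (x : V) (hx : x ∉ Δ) :
    lk G x ∩ Δ ∈ calG := by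
  apply hsat
  · intro h
    have : x ∈ lk G x ∩ Δ := by rw [h]; trivial
    exact hx this.2
  · rintro a ⟨hax, haΔ⟩ w ⟨hstd, hG⟩
    have hwΔ : w ∈ Δ := hG Δ hΔ haΔ
    have hxla : x ∈ lk G a := (hax : G.Adj x a).symm
    rcases hstd hxla with h | h
    · exact absurd (h ▸ hwΔ) hx
    · exact ⟨(h : G.Adj w x).symm, hwΔ⟩
  · intro y hy a b ha hb has hbs
    by_cases hyΔ : y ∈ Δ
    · have hxy : ¬ G.Adj x y := fun h => hy ⟨h, hyΔ⟩
      have hxs : x ∈ (st G y)ᶜ := by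
        intro hmem
        rcases hmem with h | h
        · exact hx (h ▸ hyΔ)
        · exact hxy (h : G.Adj y x).symm
      exact Relation.ReflTransGen.head ⟨has, hxs, Or.inl (ha.1 : G.Adj x a).symm⟩
        (Relation.ReflTransGen.single ⟨hxs, hbs, Or.inl hb.1⟩)
    · exact Relation.ReflTransGen.single
        ⟨has, hbs, Or.inr ⟨Δ, ⟨hΔ, hyΔ⟩, ha.2, hb.2⟩⟩

/-- For saturated `𝒢` and `A_Δ ∈ 𝒢`: for `u ∈ Δ` and any vertex
`v`, `u ≤_𝒢 v` iff `v ∈ Δ` and `u ≤_{𝒢_Δ} v` computed inside `Δ`. -/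
theorem induced_order [Fintype V] (G : SimpleGraph V) (calG : Set (Set V))
    (hprop : Proper calG) (hsat : Saturated G calG)
    (Δ : Set V) (hΔ : Δ ∈ calG) (u : V) (hu : u ∈ Δ) (v : V) :
    gLE G calG u v ↔
      (v ∈ Δ ∧ leIn G Δ u v ∧ ∀ Θ ∈ inducedG calG Δ, u ∈ Θ → v ∈ Θ) := by
  constructor
  · rintro ⟨hstd, hG⟩
    have hv : v ∈ Δ := hG Δ hΔ hu
    refine ⟨hv, ?_, ?_⟩
    · rintro w ⟨hwΔ, hadj⟩
      rcases hstd (hadj : G.Adj u w) with h | h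
      · exact Or.inl h
      · exact Or.inr ⟨hwΔ, h⟩
    · rintro Θ ⟨Λ, hΛ, rfl, _⟩ huΘ
      exact ⟨hv, hG Λ hΛ huΘ.2⟩
  · rintro ⟨hv, hleIn, hind⟩
    have hmem : ∀ Λ ∈ calG, u ∈ Λ → v ∈ Λ := by
      intro Λ hΛ huΛ
      by_cases h : Δ ∩ Λ = Δ
      · have : Δ ⊆ Λ := fun a haΔ => by rw [← h] at haΔ; exact haΔ.2
        exact this hv
      · exact (hind (Δ ∩ Λ) ⟨Λ, hΛ, rfl, h⟩ ⟨hu, huΛ⟩).2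
    refine ⟨?_, hmem⟩
    intro w hw
    have hadj : G.Adj u w := hw
    by_cases hwΔ : w ∈ Δ
    · rcases hleIn ⟨hwΔ, hadj⟩ with h | h
      · exact Or.inl h
      · exact Or.inr h.2
    · have hΛ : lk G w ∩ Δ ∈ calG := lk_inter_mem G calG hsat Δ hΔ w hwΔ
      have huΛ : u ∈ lk G w ∩ Δ := ⟨hadj.symm, hu⟩
      have hvΛ : v ∈ lk G w ∩ Δ := hmem _ hΛ huΛ
      exact Or.inr (hvΛ.1 : G.Adj w v).symm

end RAAGPaper
end
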